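/- arXiv:2408.02607 — 9 statements merged into one kernel-verified Lean document; each statement's English description precedes it below -/
import Mathlib

section
/- Let n ≥ 1 and K ⊆ {1,…,n}. (a) If n ∉ K then t·w_K = w_{K∪{n}}, and if n ∈ K then t·w_K = w_{K∖{n}}. (b) If 1 ≤ i ≤ n−1 with i ∉ K and i+1 ∈ K, then s_i·w_K = w_{(K∪{i})∖{i+1}}. (c) If 1 ≤ i ≤ n−1 with i ∈ K and i+1 ∉ K, then s_i·w_K = w_{(K∖{i})∪{i+1}}. -/
/-- The signed permutation `s_i` of `ℤ`, swapping `i ↔ i+1` and `-i ↔ -(i+1)`. -/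
def sPerm (i : ℤ) : Equiv.Perm ℤ :=
  Equiv.swap i (i + 1) * Equiv.swap (-i) (-(i + 1))

/-- The permutation `t` of `ℤ`, swapping `n ↔ -n`. -/
def tPerm (n : ℕ) : Equiv.Perm ℤ :=
  Equiv.swap (n : ℤ) (-(n : ℤ))

/-- `c_k = s_k s_{k+1} ⋯ s_{n-1} t`. -/
def cPerm (n k : ℕ) : Equiv.Perm ℤ :=
  (((List.range (n - k)).map (fun j => sPerm ((k : ℤ) + (j : ℤ)))).prod) * tPerm n

/-- `w_K`: product of the `c_k`, `k ∈ K`, in decreasing order of `k`. -/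
def wPerm (n : ℕ) (K : Finset ℕ) : Equiv.Perm ℤ :=
  (((K.sort (· ≤ ·)).reverse).map (cPerm n)).prod

lemma cPerm_eq (n k : ℕ) : cPerm n k =
    ((List.range (n-k)).map (fun j : ℕ => sPerm ((k:ℤ)+(j:ℤ)))).prod * tPerm n := by
  rw [cPerm]
  congr 1
  have h : (do let a ← List.range (n - k); pure ((a:ℕ):ℤ) : List ℤ)
      = (List.range (n-k)).map (Nat.cast : ℕ → ℤ) := by
    induction (List.range (n-k)) with
    | nil => rfl
    | cons a t ih => simpa [List.flatMap_cons] using ih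
  rw [h, List.map_map]
  rfl

lemma sPerm_fix {i x : ℤ} (h1 : x ≠ i) (h2 : x ≠ i + 1) (h3 : x ≠ -i) (h4 : x ≠ -(i+1)) :
    sPerm i x = x := by
  have e1 : Equiv.swap (-i) (-(i+1)) x = x := Equiv.swap_apply_of_ne_of_ne h3 h4
  have e2 : Equiv.swap i (i+1) x = x := Equiv.swap_apply_of_ne_of_ne h1 h2
  simp only [sPerm, Equiv.Perm.mul_apply, e1, e2]

lemma list_prod_fix {l : List (Equiv.Perm ℤ)} {x : ℤ} (h : ∀ g ∈ l, g x = x) :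
    l.prod x = x := by
  induction l with
  | nil => simp
  | cons a t ih =>
      simp only [List.prod_cons, Equiv.Perm.mul_apply]
      rw [ih (fun g hg => h g (List.mem_cons_of_mem _ hg)), h a List.mem_cons_self]

lemma cPerm_fix {n k : ℕ} (hk : k ≤ n) {x : ℤ} (h1 : -(k:ℤ) < x) (h2 : x < k) :
    cPerm n k x = x := by
  have hn1 : x ≠ (n:ℤ) := by omega
  have hn2 : x ≠ -(n:ℤ) := by omega
  have ht : tPerm n x = x := Equiv.swap_apply_of_ne_of_ne hn1 hn2
  have hp : ((List.range (n-k)).map (fun j : ℕ => sPerm ((k:ℤ)+(j:ℤ)))).prod x = x := by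
    apply list_prod_fix
    intro g hg
    simp only [List.mem_map, List.mem_range] at hg
    obtain ⟨j, hj, rfl⟩ := hg
    apply sPerm_fix <;> omega
  rw [cPerm_eq]
  calc (((List.range (n-k)).map (fun j : ℕ => sPerm ((k:ℤ)+(j:ℤ)))).prod * tPerm n) x
      = ((List.range (n-k)).map (fun j : ℕ => sPerm ((k:ℤ)+(j:ℤ)))).prod (tPerm n x) :=
        Equiv.Perm.mul_apply _ _ _
    _ = ((List.range (n-k)).map (fun j : ℕ => sPerm ((k:ℤ)+(j:ℤ)))).prod x := by rw [ht]
    _ = x := hp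

lemma sPerm_moves {i x : ℤ} (h : sPerm i x ≠ x) :
    x = i ∨ x = i + 1 ∨ x = -i ∨ x = -(i+1) := by
  by_contra hc
  push_neg at hc
  exact h (sPerm_fix hc.1 hc.2.1 hc.2.2.1 hc.2.2.2)

lemma sPerm_commute_cPerm {i k n : ℕ} (hik : i + 2 ≤ k) (hkn : k ≤ n) :
    Commute (sPerm (i:ℤ)) (cPerm n k) := by
  apply Equiv.Perm.Disjoint.commute
  intro x
  by_cases h : sPerm (i:ℤ) x = x
  · exact Or.inl h
  · right
    rcases sPerm_moves h with h' | h' | h' | h' <;>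
      (apply cPerm_fix hkn <;> omega)

lemma sPerm_sq (i : ℕ) (hi : 1 ≤ i) : sPerm (i:ℤ) * sPerm (i:ℤ) = 1 := by
  have hc : Commute (Equiv.swap (i:ℤ) ((i:ℤ) + 1)) (Equiv.swap (-(i:ℤ)) (-((i:ℤ) + 1))) := by
    apply Equiv.Perm.Disjoint.commute
    intro x
    by_cases h : x = (i:ℤ) ∨ x = (i:ℤ) + 1
    · right
      apply Equiv.swap_apply_of_ne_of_ne <;> omega
    · left
      push_neg at h
      exact Equiv.swap_apply_of_ne_of_ne h.1 h.2
  simp only [sPerm]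
  calc (Equiv.swap (i:ℤ) ((i:ℤ)+1) * Equiv.swap (-(i:ℤ)) (-((i:ℤ)+1))) *
        (Equiv.swap (i:ℤ) ((i:ℤ)+1) * Equiv.swap (-(i:ℤ)) (-((i:ℤ)+1)))
      = Equiv.swap (i:ℤ) ((i:ℤ)+1) * (Equiv.swap (-(i:ℤ)) (-((i:ℤ)+1)) *
          Equiv.swap (i:ℤ) ((i:ℤ)+1)) * Equiv.swap (-(i:ℤ)) (-((i:ℤ)+1)) := by group
    _ = Equiv.swap (i:ℤ) ((i:ℤ)+1) * (Equiv.swap (i:ℤ) ((i:ℤ)+1) *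
          Equiv.swap (-(i:ℤ)) (-((i:ℤ)+1))) * Equiv.swap (-(i:ℤ)) (-((i:ℤ)+1)) := by
        rw [hc.eq]
    _ = (Equiv.swap (i:ℤ) ((i:ℤ)+1) * Equiv.swap (i:ℤ) ((i:ℤ)+1)) *
          (Equiv.swap (-(i:ℤ)) (-((i:ℤ)+1)) * Equiv.swap (-(i:ℤ)) (-((i:ℤ)+1))) := by group
    _ = 1 := by rw [Equiv.swap_mul_self, Equiv.swap_mul_self, one_mul]

lemma tPerm_sq (n : ℕ) : tPerm n * tPerm n = 1 := Equiv.swap_mul_self _ _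

lemma cPerm_succ {n i : ℕ} (h : i < n) : cPerm n i = sPerm (i:ℤ) * cPerm n (i+1) := by
  have h1 : n - i = (n - (i+1)) + 1 := by omega
  have key : (List.range (n - i)).map (fun j : ℕ => sPerm ((i:ℤ) + (j:ℤ)))
      = sPerm (i:ℤ) ::
        (List.range (n - (i+1))).map (fun j : ℕ => sPerm ((↑(i+1):ℤ) + (j:ℤ))) := by
    rw [h1, List.range_succ_eq_map, List.map_cons, List.map_map]
    refine congrArg₂ List.cons (by norm_num) ?_
    apply List.map_congr_left
    intro a _
    simp only [Function.comp_apply]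
    congr 1
    push_cast [Nat.succ_eq_add_one]
    ring
  rw [cPerm_eq, key, List.prod_cons, mul_assoc, ← cPerm_eq]

lemma cPerm_self (n : ℕ) : cPerm n n = tPerm n := by
  simp [cPerm]

/-- sort of a finset whose max is `N` splits off `N` at the end. -/
lemma sort_split {K : Finset ℕ} {N : ℕ} (hN : N ∈ K) (h : ∀ x ∈ K, x ≤ N) :
    K.sort (· ≤ ·) = (K.erase N).sort (· ≤ ·) ++ [N] := by
  refine (fun hp h1 h2 => List.Perm.eq_of_pairwise' (r := (· ≤ ·)) h1 h2 hp) ?_ ?_ ?_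
  · rw [← Multiset.coe_eq_coe]
    have h1 : ((K.sort (· ≤ ·) : List ℕ) : Multiset ℕ) = K.val := Finset.sort_eq _ _
    have h2 : (((K.erase N).sort (· ≤ ·) : List ℕ) : Multiset ℕ) = (K.erase N).val :=
      Finset.sort_eq _ _
    have h3 : (((K.erase N).sort (· ≤ ·) ++ [N] : List ℕ) : Multiset ℕ)
        = (K.erase N).val + {N} := by
      rw [← Multiset.coe_singleton, ← h2]
      rfl
    rw [h1, h3, Finset.erase_val, add_comm, Multiset.singleton_add,
      Multiset.cons_erase (Finset.mem_def.mp hN)]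
  · exact Finset.pairwise_sort _ _
  · rw [List.pairwise_append]
    refine ⟨Finset.pairwise_sort _ _, List.pairwise_singleton _ _, ?_⟩
    intro a ha b hb
    rw [List.mem_singleton] at hb
    subst hb
    exact h a (Finset.mem_of_mem_erase ((Finset.mem_sort _).mp ha))

/-- `w_K` as a product over a full reversed range, with `1` at missing indices. -/
lemma wPerm_repr (n : ℕ) : ∀ (N : ℕ) (K : Finset ℕ), (∀ x ∈ K, x < N) →
    wPerm n K =
      (((List.range N).reverse).map (fun k => if k ∈ K then cPerm n k else 1)).prod := by
  intro N
  induction N with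
  | zero =>
      intro K hK
      have : K = ∅ := Finset.eq_empty_of_forall_notMem (fun x hx => by
        exact absurd (hK x hx) (Nat.not_lt_zero x))
      subst this
      simp [wPerm]
  | succ N ih =>
      intro K hK
      rw [List.range_succ, List.reverse_append]
      simp only [List.reverse_singleton, List.singleton_append, List.map_cons, List.prod_cons]
      have hcongr : ((List.range N).reverse).map (fun k => if k ∈ K then cPerm n k else 1) =
          ((List.range N).reverse).map (fun k => if k ∈ K.erase N then cPerm n k else 1) := by
        apply List.map_congr_left
        intro a ha
        rw [List.mem_reverse, List.mem_range] at ha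
        have : a ∈ K ↔ a ∈ K.erase N := by
          rw [Finset.mem_erase]
          exact ⟨fun h => ⟨Nat.ne_of_lt ha, h⟩, fun h => h.2⟩
        exact if_congr this rfl rfl
      by_cases hN : N ∈ K
      · have herase : ∀ x ∈ K.erase N, x < N := by
          intro x hx
          rw [Finset.mem_erase] at hx
          have := hK x hx.2
          omega
        rw [if_pos hN, hcongr, ← ih (K.erase N) herase]
        rw [wPerm, sort_split hN (fun x hx => Nat.lt_succ_iff.mp (hK x hx))]
        rw [List.reverse_append, List.reverse_singleton, List.singleton_append,
          List.map_cons, List.prod_cons, wPerm]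
      · have hlt : ∀ x ∈ K, x < N := by
          intro x hx
          have h1 := hK x hx
          have h2 : x ≠ N := fun h => hN (h ▸ hx)
          omega
        rw [if_neg hN, one_mul, ← ih K hlt]

lemma mem_ite_prod_commute {n i : ℕ} (K : Finset ℕ) (l : List ℕ)
    (hl : ∀ k ∈ l, i + 2 ≤ k ∧ k ≤ n) :
    Commute (sPerm (i:ℤ)) ((l.map (fun k => if k ∈ K then cPerm n k else 1)).prod) := by
  apply Commute.list_prod_right
  intro x hx
  rw [List.mem_map] at hx
  obtain ⟨k, hk, rfl⟩ := hx
  by_cases h : k ∈ K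
  · rw [if_pos h]
    exact sPerm_commute_cPerm (hl k hk).1 (hl k hk).2
  · rw [if_neg h]
    exact Commute.one_right _

theorem stmt0 (n : ℕ) (hn : 1 ≤ n) (K : Finset ℕ) (hK : K ⊆ Finset.Icc 1 n) :
    ((n ∉ K → tPerm n * wPerm n K = wPerm n (insert n K)) ∧
      (n ∈ K → tPerm n * wPerm n K = wPerm n (K.erase n))) ∧
    (∀ i : ℕ, 1 ≤ i → i ≤ n - 1 → i ∉ K → i + 1 ∈ K →
      sPerm (i : ℤ) * wPerm n K = wPerm n (insert i (K.erase (i + 1)))) ∧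
    (∀ i : ℕ, 1 ≤ i → i ≤ n - 1 → i ∈ K → i + 1 ∉ K →
      sPerm (i : ℤ) * wPerm n K = wPerm n (insert (i + 1) (K.erase i))) := by
  have hKlt : ∀ x ∈ K, x < n + 1 := by
    intro x hx
    have := Finset.mem_Icc.mp (hK hx)
    omega
  constructor
  · constructor
    · -- n ∉ K
      intro hnK
      rw [wPerm_repr n (n+1) K hKlt,
        wPerm_repr n (n+1) (insert n K) (by
          intro x hx
          rcases Finset.mem_insert.mp hx with h | h
          · omega
          · exact hKlt x h)]
      rw [List.range_succ, List.reverse_append]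
      simp only [List.reverse_singleton, List.singleton_append, List.map_cons, List.prod_cons]
      rw [if_neg hnK, if_pos (Finset.mem_insert_self n K), one_mul, cPerm_self]
      congr 1
      apply congrArg
      apply List.map_congr_left
      intro a ha
      rw [List.mem_reverse, List.mem_range] at ha
      have : a ∈ K ↔ a ∈ insert n K := by
        rw [Finset.mem_insert]
        exact ⟨Or.inr, fun h => h.resolve_left (by omega)⟩
      exact if_congr this rfl rfl
    · -- n ∈ K
      intro hnK
      rw [wPerm_repr n (n+1) K hKlt,
        wPerm_repr n (n+1) (K.erase n) (fun x hx => hKlt x (Finset.mem_of_mem_erase hx))]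
      rw [List.range_succ, List.reverse_append]
      simp only [List.reverse_singleton, List.singleton_append, List.map_cons, List.prod_cons]
      rw [if_pos hnK, if_neg (Finset.notMem_erase _ _), one_mul, cPerm_self,
        ← mul_assoc, tPerm_sq, one_mul]
      apply congrArg
      apply List.map_congr_left
      intro a ha
      rw [List.mem_reverse, List.mem_range] at ha
      have : a ∈ K ↔ a ∈ K.erase n := by
        rw [Finset.mem_erase]
        exact ⟨fun h => ⟨by omega, h⟩, fun h => h.2⟩
      exact if_congr this rfl rfl
  · have main : ∀ (i : ℕ) (K : Finset ℕ), (∀ x ∈ K, x < n + 1) → 1 ≤ i → i ≤ n - 1 →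
        ∀ (K' : Finset ℕ), (∀ x ∈ K', x < n + 1) →
        (∀ k, k ≠ i → k ≠ i + 1 → (k ∈ K ↔ k ∈ K')) →
        sPerm (i:ℤ) * ((if (i+1) ∈ K then cPerm n (i+1) else 1) * (if i ∈ K then cPerm n i else 1))
          = ((if (i+1) ∈ K' then cPerm n (i+1) else 1) * (if i ∈ K' then cPerm n i else 1)) →
        sPerm (i:ℤ) * wPerm n K = wPerm n K' := by
      intro i K hKlt' hi1 hi2 K' hK'lt hmem hmid
      have hsplit : n + 1 = i + 2 + (n - 1 - i) := by omega
      have hr2 : List.range (i + 2) = List.range i ++ [i, i + 1] := by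
        rw [List.range_add]
        simp [List.range_succ]
      rw [wPerm_repr n (n+1) K hKlt', wPerm_repr n (n+1) K' hK'lt, hsplit,
        show List.range (i + 2 + (n - 1 - i)) =
          List.range (i+2) ++ (List.range (n-1-i)).map (fun x => i+2+x) from
          List.range_add, hr2]
      simp only [List.reverse_append, List.map_append, List.prod_append, List.reverse_cons,
        List.reverse_nil, List.nil_append, List.singleton_append, List.map_cons,
        List.prod_cons, List.map_nil, List.prod_nil, mul_one]
      have hP1' :
          ((((List.range (n - 1 - i)).map (fun x => i + 2 + x)).reverse).map
            (fun k => if k ∈ K' then cPerm n k else 1)).prod =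
          ((((List.range (n - 1 - i)).map (fun x => i + 2 + x)).reverse).map
            (fun k => if k ∈ K then cPerm n k else 1)).prod := by
        apply congrArg
        apply List.map_congr_left
        intro a ha
        rw [List.mem_reverse, List.mem_map] at ha
        obtain ⟨j, hj, rfl⟩ := ha
        exact if_congr (hmem _ (by omega) (by omega)).symm rfl rfl
      have hP2' :
          (((List.range i).reverse).map (fun k => if k ∈ K' then cPerm n k else 1)).prod =
          (((List.range i).reverse).map (fun k => if k ∈ K then cPerm n k else 1)).prod := by
        apply congrArg
        apply List.map_congr_left
        intro a ha
        rw [List.mem_reverse, List.mem_range] at ha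
        exact if_congr (hmem _ (by omega) (by omega)).symm rfl rfl
      rw [hP1', hP2']
      set P1 : Equiv.Perm ℤ :=
        ((((List.range (n - 1 - i)).map (fun x => i + 2 + x)).reverse).map
          (fun k => if k ∈ K then cPerm n k else 1)).prod with hP1
      set P2 : Equiv.Perm ℤ :=
        (((List.range i).reverse).map (fun k => if k ∈ K then cPerm n k else 1)).prod with hP2
      have hP1c : Commute (sPerm (i:ℤ)) P1 := by
        apply mem_ite_prod_commute
        intro k hk
        rw [List.mem_reverse, List.mem_map] at hk
        obtain ⟨j, hj, rfl⟩ := hk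
        rw [List.mem_range] at hj
        omega
      calc sPerm (i:ℤ) * (P1 * ((if (i+1) ∈ K then cPerm n (i+1) else 1) *
              ((if i ∈ K then cPerm n i else 1) * P2)))
          = P1 * ((sPerm (i:ℤ) * ((if (i+1) ∈ K then cPerm n (i+1) else 1) *
              (if i ∈ K then cPerm n i else 1))) * P2) := by
            rw [← mul_assoc, hP1c.eq]
            simp only [mul_assoc]
        _ = P1 * (((if (i+1) ∈ K' then cPerm n (i+1) else 1) *
              (if i ∈ K' then cPerm n i else 1)) * P2) := by rw [hmid]
        _ = P1 * ((if (i+1) ∈ K' then cPerm n (i+1) else 1) *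
              ((if i ∈ K' then cPerm n i else 1) * P2)) := by simp only [mul_assoc]
    constructor
    · -- (b)
      intro i hi1 hi2 hiK hi1K
      have hin : i < n := by omega
      apply main i K hKlt hi1 hi2
      · intro x hx
        rcases Finset.mem_insert.mp hx with h | h
        · omega
        · exact hKlt x (Finset.mem_of_mem_erase h)
      · intro k hk1 hk2
        simp only [Finset.mem_insert, Finset.mem_erase]
        constructor
        · intro h; exact Or.inr ⟨hk2, h⟩
        · rintro (h | h)
          · exact absurd h hk1
          · exact h.2
      · have m1 : i ∈ insert i (K.erase (i+1)) := Finset.mem_insert_self _ _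
        have m2 : i + 1 ∉ insert i (K.erase (i+1)) := by
          simp only [Finset.mem_insert, Finset.mem_erase]
          omega
        rw [if_pos hi1K, if_neg hiK, mul_one, if_neg m2, if_pos m1, one_mul, ← cPerm_succ hin]
    · -- (c)
      intro i hi1 hi2 hiK hi1K
      have hin : i < n := by omega
      apply main i K hKlt hi1 hi2
      · intro x hx
        rcases Finset.mem_insert.mp hx with h | h
        · omega
        · exact hKlt x (Finset.mem_of_mem_erase h)
      · intro k hk1 hk2
        simp only [Finset.mem_insert, Finset.mem_erase]
        constructor
        · intro h; exact Or.inr ⟨hk1, h⟩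
        · rintro (h | h)
          · exact absurd h hk2
          · exact h.2
      · have m1 : i + 1 ∈ insert (i+1) (K.erase i) := Finset.mem_insert_self _ _
        have m2 : i ∉ insert (i+1) (K.erase i) := by
          simp only [Finset.mem_insert, Finset.mem_erase]
          omega
        rw [if_neg hi1K, if_pos hiK, one_mul, if_pos m1, if_neg m2, mul_one,
          cPerm_succ hin, ← mul_assoc, sPerm_sq i hi1, one_mul]
end

section
/- Let n ≥ 1 and K ⊆ {1,…,n}. Then the intersection of the image w_K({1,…,n}) with {1,…,n} equals {1,…,n} ∖ K; moreover K = {k ∈ {1,…,n} : there exists i with 1 ≤ i ≤ n and w_K(i) = −k}. -/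
lemma sPerm_apply (i x : ℤ) (hi : 1 ≤ i) :
    sPerm i x = if x = i then i + 1 else if x = i + 1 then i
      else if x = -i then -(i+1) else if x = -(i+1) then -i else x := by
  simp only [sPerm, Equiv.Perm.mul_apply, Equiv.swap_apply_def]
  split_ifs <;> omega

/-- A clean form of the product `s_k s_{k+1} ⋯ s_{n-1}`. -/
def prodS (n k : ℕ) : Equiv.Perm ℤ :=
  ((List.range (n - k)).map (fun j : ℕ => sPerm ((k : ℤ) + (j : ℤ)))).prod

lemma cPerm_eq_s2 (n k : ℕ) : cPerm n k = prodS n k * tPerm n := by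
  rw [cPerm, prodS]
  congr 2
  generalize List.range (n - k) = l
  induction l with
  | nil => rfl
  | cons a l ih => simp_all

lemma prodS_of_ge (n k : ℕ) (h : n ≤ k) : prodS n k = 1 := by
  have : n - k = 0 := by omega
  rw [prodS, this]; simp

lemma prodS_rec (n k : ℕ) (h : k < n) : prodS n k = sPerm (k : ℤ) * prodS n (k + 1) := by
  have h1 : n - k = (n - (k+1)) + 1 := by omega
  have hmap : List.map ((fun j : ℕ => sPerm ((k:ℤ) + (j:ℤ))) ∘ Nat.succ) (List.range (n - (k+1)))
      = List.map (fun j : ℕ => sPerm (((k+1:ℕ):ℤ) + (j:ℤ))) (List.range (n - (k+1))) := by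
    apply List.map_congr_left
    intro j _
    simp only [Function.comp_apply]
    congr 1
    push_cast
    ring
  rw [prodS, prodS, h1, List.range_succ_eq_map, List.map_cons, List.map_map, List.prod_cons, hmap]
  norm_num

lemma prodS_fix (n : ℕ) : ∀ d k, n - k = d → ∀ x : ℤ, -(k:ℤ) < x → x < k → prodS n k x = x := by
  intro d
  induction d with
  | zero =>
    intro k hk x _ _
    rw [prodS_of_ge n k (by omega)]; rfl
  | succ d ih =>
    intro k hk x h1 h2
    have hkn : k < n := by omega
    have hk1 : (1:ℤ) ≤ (k:ℤ) := by omega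
    rw [prodS_rec n k hkn, Equiv.Perm.mul_apply,
      ih (k+1) (by omega) x (by push_cast; omega) (by push_cast; omega)]
    rw [sPerm_apply _ _ hk1]
    split_ifs <;> omega

lemma prodS_shift (n : ℕ) : ∀ d k, n - k = d → 1 ≤ k → ∀ x : ℤ, (k:ℤ) ≤ x → x ≤ (n:ℤ) - 1 →
    prodS n k x = x + 1 := by
  intro d
  induction d with
  | zero => intro k hk hk1 x h1 h2; exfalso; omega
  | succ d ih =>
    intro k hk hk1 x h1 h2
    have hkn : k < n := by omega
    rw [prodS_rec n k hkn, Equiv.Perm.mul_apply]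
    rcases eq_or_lt_of_le h1 with he | hlt
    · rw [prodS_fix n d (k+1) (by omega) x (by push_cast; omega) (by push_cast; omega)]
      rw [sPerm_apply _ _ (by push_cast; omega)]
      split_ifs <;> omega
    · rw [ih (k+1) (by omega) (by omega) x (by push_cast; omega) h2]
      rw [sPerm_apply _ _ (by push_cast; omega)]
      split_ifs <;> omega

lemma prodS_negn (n : ℕ) : ∀ d k, n - k = d → 1 ≤ k → k ≤ n → prodS n k (-(n:ℤ)) = -(k:ℤ) := by
  intro d
  induction d with
  | zero =>
    intro k hk h1 h2
    have : k = n := by omega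
    rw [this, prodS_of_ge n n le_rfl]; rfl
  | succ d ih =>
    intro k hk h1 h2
    have hkn : k < n := by omega
    rw [prodS_rec n k hkn, Equiv.Perm.mul_apply, ih (k+1) (by omega) (by omega) (by omega)]
    rw [sPerm_apply _ _ (by push_cast; omega)]
    push_cast
    split_ifs <;> omega

lemma tPerm_fix (n : ℕ) (x : ℤ) (h1 : x ≠ (n:ℤ)) (h2 : x ≠ -(n:ℤ)) : tPerm n x = x :=
  Equiv.swap_apply_of_ne_of_ne h1 h2

/-- `c_k` fixes `x` for `1 ≤ x < k`. -/
lemma cPerm_fix_lt (n k : ℕ) (hk : 1 ≤ k) (hkn : k ≤ n) (x : ℤ) (h1 : 1 ≤ x) (h2 : x < k) :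
    cPerm n k x = x := by
  rw [cPerm_eq_s2, Equiv.Perm.mul_apply, tPerm_fix n x (by omega) (by omega),
    prodS_fix n (n - k) k rfl x (by omega) h2]

/-- `c_k` fixes `-x` for `1 ≤ x < k`. -/
lemma cPerm_fix_neg (n k : ℕ) (hk : 1 ≤ k) (hkn : k ≤ n) (x : ℤ) (h1 : 1 ≤ x) (h2 : x < k) :
    cPerm n k (-x) = -x := by
  rw [cPerm_eq_s2, Equiv.Perm.mul_apply, tPerm_fix n (-x) (by omega) (by omega),
    prodS_fix n (n - k) k rfl (-x) (by omega) (by omega)]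

/-- `c_k x = x + 1` for `k ≤ x ≤ n - 1`. -/
lemma cPerm_shift (n k : ℕ) (hk : 1 ≤ k) (x : ℤ) (h1 : (k:ℤ) ≤ x) (h2 : x ≤ (n:ℤ) - 1) :
    cPerm n k x = x + 1 := by
  rw [cPerm_eq_s2, Equiv.Perm.mul_apply, tPerm_fix n x (by omega) (by omega),
    prodS_shift n (n - k) k rfl hk x h1 h2]

/-- `c_k n = -k`. -/
lemma cPerm_top (n k : ℕ) (hk : 1 ≤ k) (hkn : k ≤ n) : cPerm n k (n:ℤ) = -(k:ℤ) := by
  have ht : tPerm n (n:ℤ) = -(n:ℤ) := Equiv.swap_apply_left _ _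
  rw [cPerm_eq_s2, Equiv.Perm.mul_apply, ht, prodS_negn n (n - k) k rfl hk hkn]

lemma wPerm_empty (n : ℕ) : wPerm n ∅ = 1 := by
  simp [wPerm]

lemma wPerm_insert (n : ℕ) (a : ℕ) (K : Finset ℕ) (h : ∀ x ∈ K, a < x) (ha : a ∉ K) :
    wPerm n (insert a K) = wPerm n K * cPerm n a := by
  rw [wPerm, wPerm, Finset.sort_insert (· ≤ ·) (fun b hb => le_of_lt (h b hb)) ha]
  simp

/-- The image of `c_k` on `[1, n]`. -/
lemma cPerm_image (n k : ℕ) (hk : 1 ≤ k) (hkn : k ≤ n) :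
    (cPerm n k) '' Set.Icc (1:ℤ) (n:ℤ) =
      (Set.Icc (1:ℤ) (n:ℤ) \ {(k:ℤ)}) ∪ {-(k:ℤ)} := by
  ext y
  simp only [Set.mem_image, Set.mem_union, Set.mem_diff, Set.mem_singleton_iff, Set.mem_Icc]
  constructor
  · rintro ⟨x, ⟨hx1, hx2⟩, rfl⟩
    rcases lt_or_ge x (k:ℤ) with h | h
    · rw [cPerm_fix_lt n k hk hkn x hx1 h]; left; exact ⟨⟨hx1, hx2⟩, by omega⟩
    · rcases eq_or_lt_of_le hx2 with he | hlt
      · subst he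
        rw [cPerm_top n k hk hkn]; right; rfl
      · rw [cPerm_shift n k hk x h (by omega)]; left; exact ⟨⟨by omega, by omega⟩, by omega⟩
  · rintro (⟨⟨hy1, hy2⟩, hyk⟩ | rfl)
    · rcases lt_or_ge y (k:ℤ) with h | h
      · exact ⟨y, ⟨hy1, hy2⟩, cPerm_fix_lt n k hk hkn y hy1 h⟩
      · refine ⟨y - 1, ⟨by omega, by omega⟩, ?_⟩
        rw [cPerm_shift n k hk (y-1) (by omega) (by omega)]; ring
    · exact ⟨(n:ℤ), ⟨by omega, le_rfl⟩, cPerm_top n k hk hkn⟩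

/-- The target set: `([1,n] \ K) ∪ (-K)`. -/
def CSet (n : ℕ) (K : Finset ℕ) : Set ℤ :=
  {y : ℤ | (1 ≤ y ∧ y ≤ (n:ℤ) ∧ ∀ k ∈ K, y ≠ (k:ℤ)) ∨ ∃ k ∈ K, y = -(k:ℤ)}

lemma main_lemma (n : ℕ) (K : Finset ℕ) :
    K ⊆ Finset.Icc 1 n →
    ((wPerm n K) '' Set.Icc (1:ℤ) (n:ℤ) = CSet n K ∧
      ∀ x : ℤ, 1 ≤ x → (∀ k ∈ K, x < (k:ℤ)) → wPerm n K x = x ∧ wPerm n K (-x) = -x) := by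
  induction K using Finset.induction_on_min with
  | empty =>
    intro _
    refine ⟨?_, by simp [wPerm_empty]⟩
    rw [wPerm_empty]
    ext y
    simp [CSet, Set.mem_Icc]
  | insert a K hmin ih =>
    intro hsub
    have haK : a ∉ K := fun h => lt_irrefl a (hmin a h)
    have hKsub : K ⊆ Finset.Icc 1 n := fun x hx => hsub (Finset.mem_insert_of_mem hx)
    have ha : a ∈ Finset.Icc 1 n := hsub (Finset.mem_insert_self a K)
    have ha1 : 1 ≤ a := (Finset.mem_Icc.mp ha).1
    have han : a ≤ n := (Finset.mem_Icc.mp ha).2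
    obtain ⟨ihim, ihfix⟩ := ih hKsub
    have hw : wPerm n (insert a K) = wPerm n K * cPerm n a := wPerm_insert n a K hmin haK
    have hmem : ∀ k ∈ K, 1 ≤ k ∧ k ≤ n := fun k hk => Finset.mem_Icc.mp (hKsub hk)
    constructor
    · -- image statement
      have hcomp : (wPerm n (insert a K)) '' Set.Icc (1:ℤ) (n:ℤ)
          = (wPerm n K) '' ((cPerm n a) '' Set.Icc (1:ℤ) (n:ℤ)) := by
        rw [hw, ← Set.image_comp]
        rfl
      rw [hcomp, cPerm_image n a ha1 han, Set.image_union]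
      have hfixa := ihfix (a:ℤ) (by omega) (fun k hk => by exact_mod_cast hmin k hk)
      have hdiff : (wPerm n K) '' (Set.Icc (1:ℤ) (n:ℤ) \ {(a:ℤ)})
          = CSet n K \ {(a:ℤ)} := by
        rw [Set.image_diff (wPerm n K).injective, ihim, Set.image_singleton, hfixa.1]
      rw [hdiff, Set.image_singleton, hfixa.2]
      -- now show `CSet n K \ {a} ∪ {-a} = CSet n (insert a K)`
      ext y
      simp only [CSet, Set.mem_union, Set.mem_diff, Set.mem_singleton_iff, Set.mem_setOf_eq,
        Finset.mem_insert]
      constructor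
      · rintro (⟨(⟨h1, h2, h3⟩ | ⟨k, hk, rfl⟩), hya⟩ | rfl)
        · left
          refine ⟨h1, h2, fun k hk => ?_⟩
          rcases hk with rfl | hk
          · exact hya
          · exact h3 k hk
        · right; exact ⟨k, Or.inr hk, rfl⟩
        · right; exact ⟨a, Or.inl rfl, rfl⟩
      · rintro (⟨h1, h2, h3⟩ | ⟨k, (rfl | hk), rfl⟩)
        · left
          exact ⟨Or.inl ⟨h1, h2, fun k hk => h3 k (Or.inr hk)⟩, h3 a (Or.inl rfl)⟩
        · right; rfl
        · left
          refine ⟨Or.inr ⟨k, hk, rfl⟩, ?_⟩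
          have := (hmem k hk).1
          omega
    · -- fixing statement
      intro x hx hlt
      have hxa : x < (a:ℤ) := hlt a (Finset.mem_insert_self a K)
      have hltK : ∀ k ∈ K, x < (k:ℤ) := fun k hk => hlt k (Finset.mem_insert_of_mem hk)
      rw [hw]
      constructor
      · rw [Equiv.Perm.mul_apply, cPerm_fix_lt n a ha1 han x hx hxa, (ihfix x hx hltK).1]
      · rw [Equiv.Perm.mul_apply, cPerm_fix_neg n a ha1 han x hx hxa, (ihfix x hx hltK).2]

theorem stmt2 (n : ℕ) (hn : 1 ≤ n) (K : Finset ℕ) (hK : K ⊆ Finset.Icc 1 n) :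
    ((fun x => wPerm n K x) '' Set.Icc (1 : ℤ) (n : ℤ)) ∩ Set.Icc (1 : ℤ) (n : ℤ)
        = (fun k : ℕ => (k : ℤ)) '' ↑(Finset.Icc 1 n \ K) ∧
    (↑K : Set ℕ)
        = {k : ℕ | k ∈ Finset.Icc 1 n ∧ ∃ i ∈ Finset.Icc 1 n, wPerm n K (i : ℤ) = -(k : ℤ)} := by
  obtain ⟨him, _⟩ := main_lemma n K hK
  have hmem : ∀ k ∈ K, 1 ≤ k ∧ k ≤ n := fun k hk => Finset.mem_Icc.mp (hK hk)
  constructor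
  · rw [show (fun x => wPerm n K x) = fun x => (wPerm n K) x from rfl, him]
    ext y
    simp only [Set.mem_inter_iff, Set.mem_Icc, Set.mem_image, Finset.coe_sdiff, Set.mem_diff,
      Finset.mem_coe, Finset.mem_Icc, CSet, Set.mem_setOf_eq]
    constructor
    · rintro ⟨(⟨h1, h2, h3⟩ | ⟨k, hk, rfl⟩), hy1, hy2⟩
      · refine ⟨y.toNat, ⟨⟨by omega, by omega⟩, fun hyK => ?_⟩, by omega⟩
        exact h3 y.toNat hyK (by omega)
      · have := (hmem k hk).1; omega
    · rintro ⟨m, ⟨⟨hm1, hm2⟩, hmK⟩, rfl⟩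
      refine ⟨Or.inl ⟨by exact_mod_cast hm1, by exact_mod_cast hm2, fun k hk he => ?_⟩,
        by exact_mod_cast hm1, by exact_mod_cast hm2⟩
      have hmk : m = k := by exact_mod_cast he
      exact hmK (by rw [hmk]; exact hk)
  · ext k
    simp only [Finset.coe_sort_coe, Set.mem_setOf_eq, Finset.mem_coe]
    constructor
    · intro hk
      refine ⟨hK hk, ?_⟩
      have : -(k:ℤ) ∈ CSet n K := Or.inr ⟨k, hk, rfl⟩
      rw [← him] at this
      obtain ⟨x, hx, hxe⟩ := this
      simp only [Set.mem_Icc] at hx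
      refine ⟨x.toNat, Finset.mem_Icc.mpr ⟨by omega, by omega⟩, ?_⟩
      rw [show ((x.toNat : ℕ) : ℤ) = x by omega]
      exact hxe
    · rintro ⟨hkIcc, i, hi, hie⟩
      have hk1 : 1 ≤ k := (Finset.mem_Icc.mp hkIcc).1
      have hiIcc := Finset.mem_Icc.mp hi
      have : wPerm n K (i:ℤ) ∈ CSet n K := by
        rw [← him]
        exact ⟨(i:ℤ), Set.mem_Icc.mpr ⟨by exact_mod_cast hiIcc.1, by exact_mod_cast hiIcc.2⟩, rfl⟩
      rw [hie] at this
      rcases this with ⟨h1, _, _⟩ | ⟨k', hk', he⟩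
      · omega
      · have : k = k' := by omega
        rw [this]; exact hk'
end

section
/- Let n ≥ 1, let k, l be integers with 0 ≤ k ≤ l ≤ n, and let I_{k,l} ⊆ ℝⁿ × ℝⁿ be the subspace spanned by (e_i, 0) for 1 ≤ i ≤ n−l, (e_i, e_i) for n−l < i ≤ n−k, and (0, e_i) for n−k < i ≤ n. For g ∈ GLₙ(ℝ), one has {(g a, (gᵀ)⁻¹ c) : (a,c) ∈ I_{k,l}} = I_{k,l} if and only if g_{ij} = 0 whenever (j ≤ n−l and i > n−l) or (j ≤ n−k and i > n−k), and the (l−k)×(l−k) submatrix (g_{ij})_{n−l < i ≤ n−k, n−l < j ≤ n−k} is an orthogonal matrix. -/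
open Matrix

/-- `ℝ^{2n} = ℝⁿ × ℝⁿ`. -/
abbrev SympV (n : ℕ) := (Fin n → ℝ) × (Fin n → ℝ)

/-- The symplectic form `Ω((a,c),(a',c')) = ⟨a,c'⟩ - ⟨c,a'⟩`. -/
def sympForm (n : ℕ) (u v : SympV n) : ℝ := u.1 ⬝ᵥ v.2 - u.2 ⬝ᵥ v.1

/-- A Lagrangian subspace: `n`-dimensional and isotropic for `Ω`. -/
def IsLagrangian (n : ℕ) (F : Submodule ℝ (SympV n)) : Prop :=
  Module.finrank ℝ F = n ∧ ∀ u ∈ F, ∀ v ∈ F, sympForm n u v = 0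

/-- Theta nonnegativity: `⟨a,c⟩ ≥ 0` for every `(a,c) ∈ F`. -/
def ThetaNonneg (n : ℕ) (F : Submodule ℝ (SympV n)) : Prop :=
  ∀ p ∈ F, 0 ≤ p.1 ⬝ᵥ p.2

/-- The generators of the base point `I_{k,l}`: `(e_i,0)` for `i ≤ n-l` (1-based),
`(e_i,e_i)` for `n-l < i ≤ n-k`, and `(0,e_i)` for `n-k < i ≤ n`. -/
def stdGen (n k l : ℕ) (i : Fin n) : SympV n :=
  if (i : ℕ) < n - l then (Pi.single i 1, 0)
  else if (i : ℕ) < n - k then (Pi.single i 1, Pi.single i 1)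
  else (0, Pi.single i 1)

/-- The subspace `I_{k,l}`. -/
def Ikl (n k l : ℕ) : Submodule ℝ (SympV n) := Submodule.span ℝ (Set.range (stdGen n k l))

/-- The action of `g ∈ GLₙ(ℝ)`: `(a,c) ↦ (g a, (gᵀ)⁻¹ c)`. -/
noncomputable def twistMap (n : ℕ) (g : Matrix (Fin n) (Fin n) ℝ) :
    SympV n →ₗ[ℝ] SympV n :=
  LinearMap.prodMap (Matrix.mulVecLin g) (Matrix.mulVecLin gᵀ⁻¹)

lemma stdGen_fst_apply (n k l : ℕ) (hkl : k ≤ l) (i j : Fin n) :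
    (stdGen n k l i).1 j = if j = i ∧ (i : ℕ) < n - k then 1 else 0 := by
  by_cases hji : j = i
  · subst hji
    unfold stdGen
    split_ifs with h1 h2 <;> simp_all [Pi.single_apply] <;> omega
  · unfold stdGen; split_ifs <;> first | tauto | simp [Pi.single_apply, hji]

lemma stdGen_snd_apply (n k l : ℕ) (hkl : k ≤ l) (i j : Fin n) :
    (stdGen n k l i).2 j = if j = i ∧ n - l ≤ (i : ℕ) then 1 else 0 := by
  by_cases hji : j = i
  · subst hji
    unfold stdGen
    split_ifs with h1 h2 <;> simp_all [Pi.single_apply] <;> omega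
  · unfold stdGen; split_ifs <;> first | tauto | simp [Pi.single_apply, hji]

lemma sum_gen_fst (n k l : ℕ) (hkl : k ≤ l) (c : Fin n → ℝ) (j : Fin n) :
    (∑ i : Fin n, c i • stdGen n k l i).1 j = if (j : ℕ) < n - k then c j else 0 := by
  rw [Prod.fst_sum, Finset.sum_apply, Finset.sum_eq_single j]
  · simp only [Prod.smul_fst, Pi.smul_apply, stdGen_fst_apply n k l hkl, smul_eq_mul]
    split_ifs with h1 h2 h3 <;> simp_all
  · intro b _ hb
    simp [stdGen_fst_apply n k l hkl, Ne.symm hb]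
  · simp

lemma sum_gen_snd (n k l : ℕ) (hkl : k ≤ l) (c : Fin n → ℝ) (j : Fin n) :
    (∑ i : Fin n, c i • stdGen n k l i).2 j = if n - l ≤ (j : ℕ) then c j else 0 := by
  rw [Prod.snd_sum, Finset.sum_apply, Finset.sum_eq_single j]
  · simp only [Prod.smul_snd, Pi.smul_apply, stdGen_snd_apply n k l hkl, smul_eq_mul]
    split_ifs with h1 h2 h3 <;> simp_all
  · intro b _ hb
    simp [stdGen_snd_apply n k l hkl, Ne.symm hb]
  · simp

/-- The "kernel" description of `I_{k,l}`. -/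
def Kkl (n k l : ℕ) : Submodule ℝ (SympV n) where
  carrier := {p | (∀ i : Fin n, (i : ℕ) < n - l → p.2 i = 0) ∧
    (∀ i : Fin n, n - l ≤ (i : ℕ) → (i : ℕ) < n - k → p.1 i = p.2 i) ∧
    (∀ i : Fin n, n - k ≤ (i : ℕ) → p.1 i = 0)}
  add_mem' := by
    rintro a b ⟨ha1, ha2, ha3⟩ ⟨hb1, hb2, hb3⟩
    refine ⟨fun i hi => ?_, fun i hi hi' => ?_, fun i hi => ?_⟩ <;>
      simp [ha1 i, hb1 i, ha2 i, hb2 i, ha3 i, hb3 i, *]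
  zero_mem' := by simp
  smul_mem' := by
    rintro c a ⟨ha1, ha2, ha3⟩
    refine ⟨fun i hi => ?_, fun i hi hi' => ?_, fun i hi => ?_⟩ <;>
      simp [ha1 i, ha2 i, ha3 i, *]

lemma Ikl_eq_Kkl (n k l : ℕ) (hkl : k ≤ l) (hln : l ≤ n) : Ikl n k l = Kkl n k l := by
  apply le_antisymm
  · rw [Ikl, Submodule.span_le]
    rintro _ ⟨i, rfl⟩
    refine ⟨fun j hj => ?_, fun j hj hj' => ?_, fun j hj => ?_⟩
    · rw [stdGen_snd_apply n k l hkl, if_neg]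
      rintro ⟨rfl, hle⟩; omega
    · rw [stdGen_fst_apply n k l hkl, stdGen_snd_apply n k l hkl]
      by_cases hji : j = i
      · subst hji; rw [if_pos ⟨rfl, by omega⟩, if_pos ⟨rfl, by omega⟩]
      · rw [if_neg (fun h => hji h.1), if_neg (fun h => hji h.1)]
    · rw [stdGen_fst_apply n k l hkl, if_neg]
      rintro ⟨rfl, hlt⟩; omega
  · rintro p ⟨h1, h2, h3⟩
    have hp : p = ∑ i : Fin n, (if (i : ℕ) < n - k then p.1 i else p.2 i) • stdGen n k l i := by
      refine Prod.ext (funext fun j => ?_) (funext fun j => ?_)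
      · rw [sum_gen_fst n k l hkl]
        by_cases hj : (j : ℕ) < n - k <;> simp [hj, h3 j]
        exact h3 j (by omega)
      · rw [sum_gen_snd n k l hkl]
        by_cases hj : n - l ≤ (j : ℕ)
        · rw [if_pos hj]
          by_cases hj' : (j : ℕ) < n - k <;> simp [hj']
          exact (h2 j hj hj').symm
        · rw [if_neg hj]
          exact h1 j (by omega)
    rw [hp]
    exact Submodule.sum_mem _ fun i _ =>
      Submodule.smul_mem _ _ (Submodule.subset_span ⟨i, rfl⟩)

lemma mem_Ikl (n k l : ℕ) (hkl : k ≤ l) (hln : l ≤ n) (p : SympV n) :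
    p ∈ Ikl n k l ↔ ((∀ i : Fin n, (i : ℕ) < n - l → p.2 i = 0) ∧
    (∀ i : Fin n, n - l ≤ (i : ℕ) → (i : ℕ) < n - k → p.1 i = p.2 i) ∧
    (∀ i : Fin n, n - k ≤ (i : ℕ) → p.1 i = 0)) := by
  rw [Ikl_eq_Kkl n k l hkl hln]; rfl

def midIdx (n k l : ℕ) (hkl : k ≤ l) (hln : l ≤ n) (p : Fin (l - k)) : Fin n :=
  ⟨n - l + (p : ℕ), lt_of_lt_of_le (Nat.add_lt_add_left p.isLt _) (by omega)⟩

lemma sum_middle (n k l : ℕ) (hkl : k ≤ l) (hln : l ≤ n) (f : Fin n → ℝ)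
    (h0 : ∀ i : Fin n, (i : ℕ) < n - l → f i = 0)
    (h2 : ∀ i : Fin n, n - k ≤ (i : ℕ) → f i = 0) :
    ∑ i : Fin n, f i = ∑ p : Fin (l - k), f (midIdx n k l hkl hln p) := by
  symm
  apply Finset.sum_of_injOn (midIdx n k l hkl hln)
  · intro a _ b _ hab
    have : n - l + (a : ℕ) = n - l + (b : ℕ) := congrArg Fin.val hab
    exact Fin.ext (by omega)
  · intro a _; exact Finset.mem_coe.mpr (Finset.mem_univ _)
  · intro i _ hi
    by_cases h : (i : ℕ) < n - l
    · exact h0 i h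
    · by_cases h' : n - k ≤ (i : ℕ)
      · exact h2 i h'
      · exfalso
        apply hi
        refine ⟨⟨(i : ℕ) - (n - l), by omega⟩, Finset.mem_coe.mpr (Finset.mem_univ _), ?_⟩
        exact Fin.ext (by simp [midIdx]; omega)
  · intro p _; rfl

theorem stmt7 (n k l : ℕ) (hn : 1 ≤ n) (hkl : k ≤ l) (hln : l ≤ n)
    (g : Matrix (Fin n) (Fin n) ℝ) (hg : IsUnit g.det) :
    (Ikl n k l).map (twistMap n g) = Ikl n k l ↔
      ((∀ i j : Fin n,
          (((j : ℕ) < n - l ∧ n - l ≤ (i : ℕ)) ∨ ((j : ℕ) < n - k ∧ n - k ≤ (i : ℕ))) →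
          g i j = 0) ∧
        (Matrix.of fun p q : Fin (l - k) =>
            g ⟨n - l + (p : ℕ), by have := p.isLt; omega⟩
              ⟨n - l + (q : ℕ), by have := q.isLt; omega⟩) *
        (Matrix.of fun p q : Fin (l - k) =>
            g ⟨n - l + (p : ℕ), by have := p.isLt; omega⟩
              ⟨n - l + (q : ℕ), by have := q.isLt; omega⟩)ᵀ = 1) := by
  classical
  have hgt : IsUnit gᵀ.det := by rwa [Matrix.det_transpose]
  have hmul : gᵀ * gᵀ⁻¹ = 1 := Matrix.mul_nonsing_inv _ hgt
  have himg : ∀ a c : Fin n → ℝ, twistMap n g (a, c) = (g *ᵥ a, gᵀ⁻¹ *ᵥ c) := fun a c => rfl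
  set B : Matrix (Fin (l - k)) (Fin (l - k)) ℝ :=
    Matrix.of fun p q : Fin (l - k) =>
      g (midIdx n k l hkl hln p) (midIdx n k l hkl hln q) with hB
  have hmid : ∀ p : Fin (l - k), ((midIdx n k l hkl hln p : Fin n) : ℕ) = n - l + (p : ℕ) :=
    fun p => rfl
  have hmidlt : ∀ p : Fin (l - k), n - l ≤ ((midIdx n k l hkl hln p : Fin n) : ℕ) ∧
      ((midIdx n k l hkl hln p : Fin n) : ℕ) < n - k := by
    intro p; have := p.isLt; constructor <;> simp [hmid p] <;> omega
  constructor
  · intro hMap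
    have hgen : ∀ i : Fin n, twistMap n g (stdGen n k l i) ∈ Ikl n k l := by
      intro i; rw [← hMap]
      exact Submodule.mem_map_of_mem (Submodule.subset_span ⟨i, rfl⟩)
    -- extract entry conditions
    have E0 : ∀ j i : Fin n, (j : ℕ) < n - l → n - l ≤ (i : ℕ) → g i j = 0 := by
      intro j i hj hi
      have hx := hgen j
      rw [stdGen, if_pos hj, himg, mem_Ikl n k l hkl hln] at hx
      obtain ⟨-, q2, q3⟩ := hx
      by_cases hik : (i : ℕ) < n - k
      · have := q2 i hi hik
        simpa using this
      · have := q3 i (by omega)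
        simpa using this
    have E1 : ∀ j : Fin n, n - l ≤ (j : ℕ) → (j : ℕ) < n - k →
        (∀ i : Fin n, (i : ℕ) < n - l → gᵀ⁻¹ i j = 0) ∧
        (∀ i : Fin n, n - l ≤ (i : ℕ) → (i : ℕ) < n - k → g i j = gᵀ⁻¹ i j) ∧
        (∀ i : Fin n, n - k ≤ (i : ℕ) → g i j = 0) := by
      intro j hj1 hj2
      have hx := hgen j
      rw [stdGen, if_neg (by omega), if_pos hj2, himg, mem_Ikl n k l hkl hln] at hx
      obtain ⟨q1, q2, q3⟩ := hx
      refine ⟨fun i hi => by simpa using q1 i hi,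
        fun i hi1 hi2 => by simpa using q2 i hi1 hi2,
        fun i hi => by simpa using q3 i hi⟩
    have E2 : ∀ j : Fin n, n - k ≤ (j : ℕ) →
        ∀ i : Fin n, (i : ℕ) < n - k → gᵀ⁻¹ i j = 0 := by
      intro j hj i hi
      have hx := hgen j
      rw [stdGen, if_neg (by omega), if_neg (by omega), himg, mem_Ikl n k l hkl hln] at hx
      obtain ⟨q1, q2, q3⟩ := hx
      by_cases hil : (i : ℕ) < n - l
      · simpa using q1 i hil
      · have := q2 i (by omega) hi
        simpa using this.symm
    refine ⟨?_, ?_⟩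
    · rintro i j (⟨hj, hi⟩ | ⟨hj, hi⟩)
      · exact E0 j i hj hi
      · by_cases hjl : (j : ℕ) < n - l
        · exact E0 j i hjl (by omega)
        · exact (E1 j (by omega) hj).2.2 i hi
    · show B * Bᵀ = 1
      rw [mul_eq_one_comm]
      ext p q
      have h1 := congrFun (congrFun hmul (midIdx n k l hkl hln p)) (midIdx n k l hkl hln q)
      rw [Matrix.mul_apply] at h1
      have hres := sum_middle n k l hkl hln
        (fun t => gᵀ (midIdx n k l hkl hln p) t * gᵀ⁻¹ t (midIdx n k l hkl hln q)) ?_ ?_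
      · rw [hres] at h1
        have hq := hmidlt q
        have hp := hmidlt p
        calc (Bᵀ * B) p q
            = ∑ r : Fin (l - k), g (midIdx n k l hkl hln r) (midIdx n k l hkl hln p) *
              g (midIdx n k l hkl hln r) (midIdx n k l hkl hln q) := by
              simp [Matrix.mul_apply, hB]
          _ = ∑ r : Fin (l - k), gᵀ (midIdx n k l hkl hln p) (midIdx n k l hkl hln r) *
              gᵀ⁻¹ (midIdx n k l hkl hln r) (midIdx n k l hkl hln q) := by
              refine Finset.sum_congr rfl fun r _ => ?_
              have hr := hmidlt r
              rw [Matrix.transpose_apply,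
                (E1 _ hq.1 hq.2).2.1 _ hr.1 hr.2]
          _ = (1 : Matrix (Fin n) (Fin n) ℝ) (midIdx n k l hkl hln p) (midIdx n k l hkl hln q) :=
              h1
          _ = (1 : Matrix (Fin (l - k)) (Fin (l - k)) ℝ) p q := by
              rw [Matrix.one_apply, Matrix.one_apply]
              congr 1
              simp only [eq_iff_iff]
              constructor
              · intro h; exact Fin.ext (by have := congrArg Fin.val h; simp [hmid] at this; omega)
              · rintro rfl; rfl
      · intro i hi
        have hq := hmidlt q
        simp only [Matrix.transpose_apply]
        rw [(E1 _ hq.1 hq.2).1 i hi, mul_zero]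
      · intro i hi
        have hp := hmidlt p
        simp only [Matrix.transpose_apply]
        rw [(E1 _ hp.1 hp.2).2.2 i hi, zero_mul]
  · rintro ⟨hz, horr⟩
    letI : Invertible g := g.invertibleOfIsUnitDet hg
    -- block triangularity
    set b : Fin n → ℕ := fun i => if (i : ℕ) < n - l then 0 else if (i : ℕ) < n - k then 1 else 2
      with hbdef
    have hbt : g.BlockTriangular b := by
      intro i j hij
      apply hz
      simp only [hbdef] at hij
      split_ifs at hij <;> [skip; skip; skip; skip; skip; skip; skip; skip; skip] <;>
        first | omega | (left; constructor <;> omega) | (right; constructor <;> omega)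
    have hinv : (gᵀ⁻¹).BlockTriangular (OrderDual.toDual ∘ b) :=
      Matrix.blockTriangular_inv_of_blockTriangular hbt.transpose
    have hz' : ∀ i j : Fin n, b i < b j → gᵀ⁻¹ i j = 0 := by
      intro i j hij
      exact hinv (show OrderDual.toDual (b j) < OrderDual.toDual (b i) by simpa using hij)
    have hbval0 : ∀ i : Fin n, (i : ℕ) < n - l → b i = 0 := fun i hi => if_pos hi
    have hbval1 : ∀ i : Fin n, n - l ≤ (i : ℕ) → (i : ℕ) < n - k → b i = 1 := by
      intro i hi1 hi2; simp only [hbdef]; rw [if_neg (by omega), if_pos hi2]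
    have hbval2 : ∀ i : Fin n, n - k ≤ (i : ℕ) → b i = 2 := by
      intro i hi; simp only [hbdef]; rw [if_neg (by omega), if_neg (by omega)]
    have horr' : B * Bᵀ = 1 := horr
    set H : Matrix (Fin (l - k)) (Fin (l - k)) ℝ :=
      Matrix.of fun p q : Fin (l - k) =>
        gᵀ⁻¹ (midIdx n k l hkl hln p) (midIdx n k l hkl hln q) with hH
    have hBtH : Bᵀ * H = 1 := by
      ext p q
      have h1 := congrFun (congrFun hmul (midIdx n k l hkl hln p)) (midIdx n k l hkl hln q)
      rw [Matrix.mul_apply] at h1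
      have hp := hmidlt p
      have hq := hmidlt q
      have hres := sum_middle n k l hkl hln
        (fun t => gᵀ (midIdx n k l hkl hln p) t * gᵀ⁻¹ t (midIdx n k l hkl hln q)) ?_ ?_
      · rw [hres] at h1
        calc (Bᵀ * H) p q
            = ∑ r : Fin (l - k), gᵀ (midIdx n k l hkl hln p) (midIdx n k l hkl hln r) *
              gᵀ⁻¹ (midIdx n k l hkl hln r) (midIdx n k l hkl hln q) := by
              simp [Matrix.mul_apply, hB, hH]
          _ = (1 : Matrix (Fin n) (Fin n) ℝ) (midIdx n k l hkl hln p) (midIdx n k l hkl hln q) :=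
              h1
          _ = (1 : Matrix (Fin (l - k)) (Fin (l - k)) ℝ) p q := by
              rw [Matrix.one_apply, Matrix.one_apply]
              congr 1
              simp only [eq_iff_iff]
              constructor
              · intro h; exact Fin.ext (by have := congrArg Fin.val h; simp [hmid] at this; omega)
              · rintro rfl; rfl
      · intro i hi
        rw [hz' i _ (by rw [hbval0 i hi, hbval1 _ hq.1 hq.2]; omega), mul_zero]
      · intro i hi
        simp only [Matrix.transpose_apply]
        rw [hz i _ (Or.inr ⟨hp.2, hi⟩), zero_mul]
    have hHB : H = B := by
      calc H = (B * Bᵀ) * H := by rw [horr', one_mul]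
        _ = B * (Bᵀ * H) := by rw [Matrix.mul_assoc]
        _ = B := by rw [hBtH, mul_one]
    have midEq : ∀ i j : Fin n, n - l ≤ (i : ℕ) → (i : ℕ) < n - k →
        n - l ≤ (j : ℕ) → (j : ℕ) < n - k → gᵀ⁻¹ i j = g i j := by
      intro i j hi1 hi2 hj1 hj2
      have e1 : midIdx n k l hkl hln ⟨(i : ℕ) - (n - l), by omega⟩ = i :=
        Fin.ext (by simp [midIdx]; omega)
      have e2 : midIdx n k l hkl hln ⟨(j : ℕ) - (n - l), by omega⟩ = j :=
        Fin.ext (by simp [midIdx]; omega)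
      have := congrFun (congrFun hHB ⟨(i : ℕ) - (n - l), by omega⟩) ⟨(j : ℕ) - (n - l), by omega⟩
      simpa [hH, hB, e1, e2] using this
    have hgen : ∀ i : Fin n, twistMap n g (stdGen n k l i) ∈ Ikl n k l := by
      intro i
      by_cases h1 : (i : ℕ) < n - l
      · rw [stdGen, if_pos h1, himg, mem_Ikl n k l hkl hln]
        refine ⟨fun j hj => by simp, fun j hj hj' => ?_, fun j hj => ?_⟩ <;>
          simp only [mulVec_single_one, col_apply, mul_one, mulVec_zero, Pi.zero_apply]
        · exact hz j i (Or.inl ⟨h1, hj⟩)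
        · exact hz j i (Or.inl ⟨h1, by omega⟩)
      · by_cases h2 : (i : ℕ) < n - k
        · rw [stdGen, if_neg h1, if_pos h2, himg, mem_Ikl n k l hkl hln]
          refine ⟨fun j hj => ?_, fun j hj hj' => ?_, fun j hj => ?_⟩ <;>
            simp only [mulVec_single_one, col_apply, mul_one]
          · exact hz' j i (by rw [hbval0 j hj, hbval1 i (by omega) h2]; omega)
          · exact (midEq j i hj hj' (by omega) h2).symm
          · exact hz j i (Or.inr ⟨h2, hj⟩)
        · rw [stdGen, if_neg h1, if_neg h2, himg, mem_Ikl n k l hkl hln]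
          refine ⟨fun j hj => ?_, fun j hj hj' => ?_, fun j hj => ?_⟩ <;>
            simp only [mulVec_single_one, col_apply, mul_one, mulVec_zero, Pi.zero_apply]
          · exact hz' j i (by rw [hbval0 j hj, hbval2 i (by omega)]; omega)
          · exact (hz' j i (by rw [hbval1 j hj hj', hbval2 i (by omega)]; omega)).symm
    have hle : (Ikl n k l).map (twistMap n g) ≤ Ikl n k l := by
      rw [Ikl, Submodule.map_span, Submodule.span_le]
      rintro _ ⟨_, ⟨i, rfl⟩, rfl⟩
      exact hgen i
    let e1 : (Fin n → ℝ) ≃ₗ[ℝ] (Fin n → ℝ) := LinearEquiv.ofLinear (mulVecLin g) (mulVecLin g⁻¹)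
      (by rw [← mulVecLin_mul, Matrix.mul_nonsing_inv _ hg, mulVecLin_one])
      (by rw [← mulVecLin_mul, Matrix.nonsing_inv_mul _ hg, mulVecLin_one])
    let e2 : (Fin n → ℝ) ≃ₗ[ℝ] (Fin n → ℝ) := LinearEquiv.ofLinear (mulVecLin gᵀ⁻¹) (mulVecLin gᵀ)
      (by rw [← mulVecLin_mul, Matrix.nonsing_inv_mul _ hgt, mulVecLin_one])
      (by rw [← mulVecLin_mul, Matrix.mul_nonsing_inv _ hgt, mulVecLin_one])
    let E := LinearEquiv.prodCongr e1 e2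
    have hcoe : twistMap n g = (E : SympV n →ₗ[ℝ] SympV n) := rfl
    refine Submodule.eq_of_le_of_finrank_eq hle ?_
    rw [hcoe]
    exact LinearEquiv.finrank_map_eq E _
end

section
/- Let n ≥ 1. For every symmetric positive semi-definite n×n real matrix S there exist a unique subset K ⊆ {1,…,n} and a unique matrix A ∈ M_K such that S = A Aᵀ. In particular, the map A ↦ A Aᵀ from the disjoint union of the sets M_K over K ⊆ {1,…,n} to the symmetric matrices is injective with image exactly the set of symmetric positive semi-definite matrices. -/
open Matrix

/-- Membership in `M_K`: lower triangular, columns outside `K` vanish, and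
positive diagonal entries on `K`. -/
def MemMK (n : ℕ) (K : Finset (Fin n)) (A : Matrix (Fin n) (Fin n) ℝ) : Prop :=
  (∀ i j : Fin n, (i < j ∨ j ∉ K) → A i j = 0) ∧ ∀ k ∈ K, 0 < A k k

/-- `C_K = {A Aᵀ : A ∈ M_K}`. -/
def CsetK (n : ℕ) (K : Finset (Fin n)) : Set (Matrix (Fin n) (Fin n) ℝ) :=
  {S | ∃ A, MemMK n K A ∧ S = A * Aᵀ}

def ext1 {n : ℕ} (a : ℝ) (c : Fin n → ℝ) (B : Matrix (Fin n) (Fin n) ℝ) :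
    Matrix (Fin (n+1)) (Fin (n+1)) ℝ :=
  Matrix.of (Fin.cases (Fin.cons a 0) (fun i => Fin.cons (c i) (B i)))

section helpers
variable {n : ℕ} (a : ℝ) (c : Fin n → ℝ) (B : Matrix (Fin n) (Fin n) ℝ)

@[simp] lemma ext1_00 : ext1 a c B 0 0 = a := rfl
@[simp] lemma ext1_0s (j : Fin n) : ext1 a c B 0 j.succ = 0 := rfl
@[simp] lemma ext1_s0 (i : Fin n) : ext1 a c B i.succ 0 = c i := rfl
@[simp] lemma ext1_ss (i j : Fin n) : ext1 a c B i.succ j.succ = B i j := rfl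

lemma prod00 : (ext1 a c B * (ext1 a c B)ᵀ) 0 0 = a * a := by
  simp [mul_apply, Fin.sum_univ_succ]

lemma prod0s (j : Fin n) : (ext1 a c B * (ext1 a c B)ᵀ) 0 j.succ = a * c j := by
  simp [mul_apply, Fin.sum_univ_succ]

lemma prods0 (i : Fin n) : (ext1 a c B * (ext1 a c B)ᵀ) i.succ 0 = c i * a := by
  simp [mul_apply, Fin.sum_univ_succ]

lemma prodss (i j : Fin n) :
    (ext1 a c B * (ext1 a c B)ᵀ) i.succ j.succ = c i * c j + (B * Bᵀ) i j := by
  simp [mul_apply, Fin.sum_univ_succ]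

lemma eq_ext1 (A : Matrix (Fin (n+1)) (Fin (n+1)) ℝ) (h : ∀ j : Fin n, A 0 j.succ = 0) :
    A = ext1 (A 0 0) (fun i => A i.succ 0) (Matrix.of fun i j => A i.succ j.succ) := by
  ext i j
  induction i using Fin.cases with
  | zero => induction j using Fin.cases with
    | zero => rfl
    | succ j => simp [h]
  | succ i => induction j using Fin.cases with
    | zero => rfl
    | succ j => rfl

end helpers

lemma psd_diag_nonneg {m : ℕ} {S : Matrix (Fin m) (Fin m) ℝ} (hS : S.PosSemidef)
    (k : Fin m) : 0 ≤ S k k := by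
  have := hS.dotProduct_mulVec_nonneg (Pi.single k 1)
  simpa [dotProduct, mulVec, Pi.single_apply, Finset.sum_ite_eq'] using this

lemma psd_col_zero {m : ℕ} {S : Matrix (Fin m) (Fin m) ℝ} (hS : S.PosSemidef)
    {k : Fin m} (hk : S k k = 0) (i : Fin m) : S i k = 0 := by
  obtain ⟨B, rfl⟩ : ∃ B : Matrix (Fin m) (Fin m) ℝ, S = Bᴴ * B := by
    open scoped MatrixOrder in
    obtain ⟨B, hB⟩ := CStarAlgebra.nonneg_iff_eq_star_mul_self.mp hS.nonneg
    exact ⟨B, hB⟩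
  have hcol : ∀ j, B j k = 0 := by
    intro j
    have h0 : ∑ l, B l k * B l k = 0 := by
      simpa [mul_apply, conjTranspose_apply] using hk
    have := (Finset.sum_eq_zero_iff_of_nonneg
      (fun l _ => mul_self_nonneg (B l k))).mp h0 j (Finset.mem_univ j)
    exact mul_self_eq_zero.mp this
  simp [mul_apply, conjTranspose_apply, hcol]

lemma psd_symm {m : ℕ} {S : Matrix (Fin m) (Fin m) ℝ} (hS : S.PosSemidef)
    (i j : Fin m) : S i j = S j i := by
  have := congrFun (congrFun hS.1 i) j
  simpa [conjTranspose_apply] using this.symm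

lemma schur_psd {m : ℕ} {S : Matrix (Fin (m+1)) (Fin (m+1)) ℝ} (hS : S.PosSemidef)
    {a : ℝ} (ha : 0 < a) (ha2 : a * a = S 0 0) :
    (Matrix.of fun i j : Fin m =>
      S i.succ j.succ - (S i.succ 0 / a) * (S j.succ 0 / a)).PosSemidef := by
  set c : Fin m → ℝ := fun i => S i.succ 0 / a with hc
  refine Matrix.PosSemidef.of_dotProduct_mulVec_nonneg ?_ ?_
  · ext i j
    simp only [conjTranspose_apply, Matrix.of_apply, star_trivial]
    rw [psd_symm hS j.succ i.succ]
    ring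
  · intro x
    set w : ℝ := ∑ j, c j * x j with hw
    set t : ℝ := -w / a with ht
    have hat : a * t = -w := by
      rw [ht, mul_comm, div_mul_cancel₀ _ ha.ne']
    have hv : ∀ j : Fin m, S j.succ 0 = c j * a := fun j =>
      (div_mul_cancel₀ _ ha.ne').symm
    set q : ℝ := ∑ i, x i * ∑ j, S i.succ j.succ * x j with hq
    have hLHS : (star x) ⬝ᵥ ((Matrix.of fun i j : Fin m =>
        S i.succ j.succ - c i * c j) *ᵥ x) = q - w * w := by
      simp only [star_trivial, dotProduct, mulVec, Matrix.of_apply]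
      have h1 : ∀ i : Fin m, (∑ j, (S i.succ j.succ - c i * c j) * x j)
          = (∑ j, S i.succ j.succ * x j) - c i * w := by
        intro i
        rw [Finset.mul_sum, ← Finset.sum_sub_distrib]
        exact Finset.sum_congr rfl fun j _ => by ring
      calc ∑ i, x i * ∑ j, (S i.succ j.succ - c i * c j) * x j
          = ∑ i, (x i * ∑ j, S i.succ j.succ * x j - (c i * x i) * w) := by
            refine Finset.sum_congr rfl fun i _ => ?_
            rw [h1 i]; ring
        _ = q - (∑ i, c i * x i) * w := by
            rw [Finset.sum_sub_distrib, Finset.sum_mul, hq]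
        _ = q - w * w := by rw [← hw]
    have hRHS : (star (Fin.cons t x : Fin (m+1) → ℝ)) ⬝ᵥ (S *ᵥ Fin.cons t x)
        = q - w * w := by
      simp only [star_trivial, dotProduct, mulVec, Fin.sum_univ_succ, Fin.cons_zero,
        Fin.cons_succ]
      have h0row : ∀ j : Fin m, S 0 j.succ = c j * a := fun j => by
        rw [psd_symm hS 0 j.succ]; exact hv j
      rw [← ha2]
      have e1 : (∑ j, S 0 j.succ * x j) = a * w := by
        rw [hw, Finset.mul_sum]
        exact Finset.sum_congr rfl fun j _ => by rw [h0row j]; ring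
      have e2 : (∑ i, x i * (S i.succ 0 * t + ∑ j, S i.succ j.succ * x j))
          = w * (a * t) + q := by
        rw [hw, Finset.sum_mul, hq, ← Finset.sum_add_distrib]
        exact Finset.sum_congr rfl fun i _ => by rw [hv i]; ring
      rw [e1, e2]
      have : t * (a * a * t + a * w) = (a * t) * (a * t) + (a * t) * w := by ring
      rw [this, hat]; ring
    have h := hS.dotProduct_mulVec_nonneg (Fin.cons t x)
    rw [hRHS] at h
    rw [hLHS]
    exact h

theorem chol : ∀ n : ℕ, ∀ S : Matrix (Fin n) (Fin n) ℝ, S.PosSemidef →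
    ∃ K : Finset (Fin n), ∃ A : Matrix (Fin n) (Fin n) ℝ,
      MemMK n K A ∧ S = A * Aᵀ ∧
      ∀ (K' : Finset (Fin n)) (A' : Matrix (Fin n) (Fin n) ℝ),
        MemMK n K' A' → S = A' * A'ᵀ → K' = K ∧ A' = A := by
  intro n
  induction n with
  | zero =>
    intro S _
    refine ⟨∅, 0, ⟨fun i => isEmptyElim i, fun k => isEmptyElim k⟩,
      by ext i j; exact isEmptyElim i, fun K' A' _ _ => ?_⟩
    exact ⟨Finset.eq_empty_of_forall_notMem fun x => isEmptyElim x,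
      by ext i j; exact isEmptyElim i⟩
  | succ n IH =>
    intro S hS
    have hα := psd_diag_nonneg hS 0
    rcases eq_or_lt_of_le hα with h0 | hpos
    · -- S 0 0 = 0
      have hd : S 0 0 = 0 := h0.symm
      have hv : ∀ i : Fin n, S i.succ 0 = 0 := fun i => psd_col_zero hS hd i.succ
      set S' : Matrix (Fin n) (Fin n) ℝ := Matrix.of fun i j => S i.succ j.succ with hS'def
      have hS' : S'.PosSemidef := hS.submatrix Fin.succ
      obtain ⟨K₁, A₁, hmem₁, hfac₁, huniq₁⟩ := IH S' hS'
      set K : Finset (Fin (n+1)) := K₁.image Fin.succ with hK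
      have hKmem : ∀ j : Fin n, j.succ ∈ K ↔ j ∈ K₁ := by
        intro j; simp [hK, Fin.succ_inj]
      have h0K : (0 : Fin (n+1)) ∉ K := by simp [hK, Fin.succ_ne_zero]
      refine ⟨K, ext1 0 0 A₁, ⟨?_, ?_⟩, ?_, ?_⟩
      · rintro i j (hij | hj)
        · induction j using Fin.cases with
          | zero => exact absurd hij (Fin.not_lt_zero i)
          | succ j =>
            induction i using Fin.cases with
            | zero => exact ext1_0s 0 0 A₁ j
            | succ i =>
              rw [ext1_ss]
              exact hmem₁.1 i j (Or.inl (Fin.succ_lt_succ_iff.mp hij))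
        · induction j using Fin.cases with
          | zero =>
            induction i using Fin.cases with
            | zero => rfl
            | succ i => exact ext1_s0 0 0 A₁ i
          | succ j =>
            induction i using Fin.cases with
            | zero => exact ext1_0s 0 0 A₁ j
            | succ i =>
              rw [ext1_ss]
              exact hmem₁.1 i j (Or.inr fun h => hj ((hKmem j).mpr h))
      · intro k hk
        induction k using Fin.cases with
        | zero => exact absurd hk h0K
        | succ k =>
          rw [ext1_ss]
          exact hmem₁.2 k ((hKmem k).mp hk)
      · ext i j
        induction i using Fin.cases with
        | zero =>
          induction j using Fin.cases with
          | zero => rw [prod00, hd]; ring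
          | succ j => rw [prod0s, psd_symm hS 0 j.succ, hv j]; ring
        | succ i =>
          induction j using Fin.cases with
          | zero => rw [prods0, hv i]; ring
          | succ j =>
            rw [prodss]
            have := congrFun (congrFun hfac₁ i) j
            rw [hS'def] at this
            simp only [Matrix.of_apply] at this
            rw [← this]
            simp
      · rintro K' A' hA' heq
        have h0r : ∀ j : Fin n, A' 0 j.succ = 0 := fun j =>
          hA'.1 0 j.succ (Or.inl (Fin.succ_pos j))
        have hAe := eq_ext1 A' h0r
        set a' : ℝ := A' 0 0 with ha'
        set c' : Fin n → ℝ := fun i => A' i.succ 0 with hc'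
        set B' : Matrix (Fin n) (Fin n) ℝ := Matrix.of fun i j => A' i.succ j.succ with hB'
        have e00 : S 0 0 = a' * a' := by rw [heq, hAe, prod00]
        have ha'0 : a' = 0 := mul_self_eq_zero.mp (by rw [← e00, hd])
        have h0K' : (0 : Fin (n+1)) ∉ K' := fun h => by
          have := hA'.2 0 h
          rw [← ha', ha'0] at this
          exact lt_irrefl 0 this
        have hc'0 : c' = 0 := funext fun i => hA'.1 i.succ 0 (Or.inr h0K')
        have hfac' : S' = B' * B'ᵀ := by
          ext i j
          have ess : S i.succ j.succ = c' i * c' j + (B' * B'ᵀ) i j := by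
            rw [heq, hAe, prodss]
          rw [hS'def]
          simp only [Matrix.of_apply]
          rw [ess, hc'0]
          simp
        have hB'mem : MemMK n (Finset.univ.filter fun i => i.succ ∈ K') B' := by
          constructor
          · rintro i j (hij | hj)
            · exact hA'.1 i.succ j.succ (Or.inl (Fin.succ_lt_succ_iff.mpr hij))
            · exact hA'.1 i.succ j.succ (Or.inr (by simpa using hj))
          · intro k hk
            exact hA'.2 k.succ (by simpa using hk)
        obtain ⟨hK₁eq, hA₁eq⟩ := huniq₁ _ _ hB'mem hfac'
        constructor
        · ext k
          induction k using Fin.cases with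
          | zero => simp [h0K', h0K]
          | succ k =>
            rw [hKmem k, ← hK₁eq]
            simp
        · rw [hAe, ha'0, hc'0, hA₁eq]
    · -- 0 < S 0 0
      set a : ℝ := Real.sqrt (S 0 0) with haDef
      have ha : 0 < a := Real.sqrt_pos.mpr hpos
      have ha2 : a * a = S 0 0 := Real.mul_self_sqrt hα
      set c : Fin n → ℝ := fun i => S i.succ 0 / a with hcDef
      set S' : Matrix (Fin n) (Fin n) ℝ :=
        Matrix.of fun i j => S i.succ j.succ - c i * c j with hS'def
      have hS' : S'.PosSemidef := schur_psd hS ha ha2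
      obtain ⟨K₁, A₁, hmem₁, hfac₁, huniq₁⟩ := IH S' hS'
      set K : Finset (Fin (n+1)) := insert 0 (K₁.image Fin.succ) with hK
      have hKmem : ∀ j : Fin n, j.succ ∈ K ↔ j ∈ K₁ := by
        intro j; simp [hK, Fin.succ_ne_zero, Fin.succ_inj]
      have h0K : (0 : Fin (n+1)) ∈ K := Finset.mem_insert_self 0 _
      have hca : ∀ i : Fin n, c i * a = S i.succ 0 := fun i =>
        div_mul_cancel₀ _ ha.ne'
      refine ⟨K, ext1 a c A₁, ⟨?_, ?_⟩, ?_, ?_⟩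
      · rintro i j (hij | hj)
        · induction j using Fin.cases with
          | zero => exact absurd hij (Fin.not_lt_zero i)
          | succ j =>
            induction i using Fin.cases with
            | zero => exact ext1_0s a c A₁ j
            | succ i =>
              rw [ext1_ss]
              exact hmem₁.1 i j (Or.inl (Fin.succ_lt_succ_iff.mp hij))
        · induction j using Fin.cases with
          | zero => exact absurd h0K hj
          | succ j =>
            induction i using Fin.cases with
            | zero => exact ext1_0s a c A₁ j
            | succ i =>
              rw [ext1_ss]
              exact hmem₁.1 i j (Or.inr fun h => hj ((hKmem j).mpr h))
      · intro k hk
        induction k using Fin.cases with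
        | zero => exact ha
        | succ k =>
          rw [ext1_ss]
          exact hmem₁.2 k ((hKmem k).mp hk)
      · ext i j
        induction i using Fin.cases with
        | zero =>
          induction j using Fin.cases with
          | zero => rw [prod00, ha2]
          | succ j => rw [prod0s, psd_symm hS 0 j.succ, mul_comm, hca j]
        | succ i =>
          induction j using Fin.cases with
          | zero => rw [prods0, hca i]
          | succ j =>
            rw [prodss]
            have := congrFun (congrFun hfac₁ i) j
            rw [hS'def] at this
            simp only [Matrix.of_apply] at this
            rw [← this]
            simp
      · rintro K' A' hA' heq
        have h0r : ∀ j : Fin n, A' 0 j.succ = 0 := fun j =>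
          hA'.1 0 j.succ (Or.inl (Fin.succ_pos j))
        have hAe := eq_ext1 A' h0r
        set a' : ℝ := A' 0 0 with ha'Def
        set c' : Fin n → ℝ := fun i => A' i.succ 0 with hc'Def
        set B' : Matrix (Fin n) (Fin n) ℝ := Matrix.of fun i j => A' i.succ j.succ with hB'
        have e00 : S 0 0 = a' * a' := by rw [heq, hAe, prod00]
        have h0K' : (0 : Fin (n+1)) ∈ K' := by
          by_contra h
          have hz : a' = 0 := hA'.1 0 0 (Or.inr h)
          rw [hz] at e00
          simp only [mul_zero] at e00
          exact absurd e00 hpos.ne'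
        have ha'pos : 0 < a' := hA'.2 0 h0K'
        have haa : a' = a := by
          have : a' * a' = a * a := by rw [ha2, ← e00]
          exact (mul_self_inj_of_nonneg ha'pos.le ha.le).mp this
        have hcc : c' = c := funext fun i => by
          have es0 : S i.succ 0 = c' i * a' := by rw [heq, hAe, prods0]
          have : c i = c' i := by
            rw [hcDef]
            simp only
            rw [es0, haa, mul_div_cancel_right₀ _ ha.ne']
          exact this.symm
        have hfac' : S' = B' * B'ᵀ := by
          ext i j
          have ess : S i.succ j.succ = c' i * c' j + (B' * B'ᵀ) i j := by
            rw [heq, hAe, prodss]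
          rw [hS'def]
          simp only [Matrix.of_apply]
          rw [ess, hcc]
          ring
        have hB'mem : MemMK n (Finset.univ.filter fun i => i.succ ∈ K') B' := by
          constructor
          · rintro i j (hij | hj)
            · exact hA'.1 i.succ j.succ (Or.inl (Fin.succ_lt_succ_iff.mpr hij))
            · exact hA'.1 i.succ j.succ (Or.inr (by simpa using hj))
          · intro k hk
            exact hA'.2 k.succ (by simpa using hk)
        obtain ⟨hK₁eq, hA₁eq⟩ := huniq₁ _ _ hB'mem hfac'
        constructor
        · ext k
          induction k using Fin.cases with
          | zero => simp [h0K', h0K]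
          | succ k =>
            rw [hKmem k, ← hK₁eq]
            simp
        · rw [hAe, haa, hcc, hA₁eq]

theorem stmt8 (n : ℕ) (hn : 1 ≤ n) :
    (∀ S : Matrix (Fin n) (Fin n) ℝ, S.PosSemidef →
      ∃ K : Finset (Fin n), ∃ A : Matrix (Fin n) (Fin n) ℝ,
        MemMK n K A ∧ S = A * Aᵀ ∧
        ∀ (K' : Finset (Fin n)) (A' : Matrix (Fin n) (Fin n) ℝ),
          MemMK n K' A' → S = A' * A'ᵀ → K' = K ∧ A' = A) ∧
    (∀ (K : Finset (Fin n)) (A : Matrix (Fin n) (Fin n) ℝ),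
      MemMK n K A → (A * Aᵀ).PosSemidef) := by
  constructor
  · intro S hSpsd
    exact chol n S hSpsd
  · intro K A _
    have h := Matrix.posSemidef_self_mul_conjTranspose A
    have hT : Aᴴ = Aᵀ := by ext i j; simp [conjTranspose_apply]
    rwa [hT] at h
end

section
/- Let n ≥ 1 and L ⊆ {1,…,n}. In the space of n×n real matrices with its standard topology, the closure of C_L equals the union of the sets C_K over all K ⊆ {1,…,n} satisfying #(K ∩ {1,…,j}) ≤ #(L ∩ {1,…,j}) for every j with 1 ≤ j ≤ n. -/
open Matrix

lemma cholesky : ∀ (n : ℕ) (S : Matrix (Fin n) (Fin n) ℝ), S.PosSemidef →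
    ∃ K A, MemMK n K A ∧ S = A * Aᵀ := by
  intro n
  induction n with
  | zero =>
      intro S _
      exact ⟨∅, 0, ⟨fun i _ _ => i.elim0, fun k _ => k.elim0⟩, Subsingleton.elim _ _⟩
  | succ n ih =>
      intro S hS
      obtain ⟨B, hB⟩ : ∃ B : Matrix (Fin (n+1)) (Fin (n+1)) ℝ, S = Bᴴ * B := by
        open scoped MatrixOrder in exact CStarAlgebra.nonneg_iff_eq_star_mul_self.mp hS.nonneg
      have hSe : ∀ x y, S x y = ∑ k, B k x * B k y := by
        intro x y
        rw [hB, Matrix.mul_apply]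
        simp [Matrix.conjTranspose_apply]
      have hsymm : ∀ x y, S x y = S y x := by
        intro x y
        rw [hSe, hSe]
        exact Finset.sum_congr rfl fun k _ => mul_comm _ _
      set d := S 0 0 with hd
      have hd0 : 0 ≤ d := by
        rw [hd, hSe]
        exact Finset.sum_nonneg fun k _ => mul_self_nonneg _
      rcases eq_or_lt_of_le hd0 with hdz | hdp
      · -- d = 0 case
        have hb0 : ∀ k, B k 0 = 0 := by
          intro k
          have h := (Finset.sum_eq_zero_iff_of_nonneg
            (fun k _ => mul_self_nonneg (B k 0))).mp (by rw [← hSe 0 0, ← hd, ← hdz])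
          exact mul_self_eq_zero.mp (h k (Finset.mem_univ k))
        have hrow0 : ∀ y, S 0 y = 0 := by
          intro y; rw [hSe]; exact Finset.sum_eq_zero fun k _ => by rw [hb0, zero_mul]
        obtain ⟨K', A', hA', hSA'⟩ := ih (S.submatrix Fin.succ Fin.succ)
          (hS.submatrix Fin.succ)
        refine ⟨K'.map (Fin.succEmb n),
          Matrix.of fun i j =>
            Fin.cases 0 (fun i' => Fin.cases 0 (fun j' => A' i' j') j) i, ⟨?_, ?_⟩, ?_⟩
        · intro i j hij
          rcases Fin.eq_zero_or_eq_succ i with rfl | ⟨i', rfl⟩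
          · simp
          · rcases Fin.eq_zero_or_eq_succ j with rfl | ⟨j', rfl⟩
            · simp
            · simp only [Matrix.of_apply, Fin.cases_succ]
              rcases hij with h | h
              · exact hA'.1 i' j' (Or.inl (by
                  simpa [Fin.succ_lt_succ_iff] using h))
              · refine hA'.1 i' j' (Or.inr fun hc => h ?_)
                exact Finset.mem_map.mpr ⟨j', hc, rfl⟩
        · intro k hk
          obtain ⟨k', hk', rfl⟩ := Finset.mem_map.mp hk
          simpa using hA'.2 k' hk'
        · ext i j
          rw [Matrix.mul_apply]
          rcases Fin.eq_zero_or_eq_succ i with rfl | ⟨i', rfl⟩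
          · rw [hrow0]
            refine (Finset.sum_eq_zero fun k _ => ?_).symm
            simp
          · rcases Fin.eq_zero_or_eq_succ j with rfl | ⟨j', rfl⟩
            · rw [hsymm, hrow0]
              refine (Finset.sum_eq_zero fun k _ => ?_).symm
              simp
            · rw [Fin.sum_univ_succ]
              have h1 : ∀ k' : Fin n,
                  (Matrix.of fun i j => Fin.cases (0:ℝ)
                    (fun i'' => Fin.cases 0 (fun j'' => A' i'' j'') j) i : Matrix _ _ ℝ)
                    i'.succ k'.succ = A' i' k' := by intro k'; simp
              have : S i'.succ j'.succ = (A' * A'ᵀ) i' j' := by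
                have := congrFun (congrFun hSA' i') j'
                simpa using this
              rw [this, Matrix.mul_apply]
              simp
      · -- d > 0 case
        have hdne : d ≠ 0 := ne_of_gt hdp
        set s := Real.sqrt d with hs
        have hsp : 0 < s := Real.sqrt_pos.mpr hdp
        have hss : s * s = d := Real.mul_self_sqrt hd0
        set S' : Matrix (Fin n) (Fin n) ℝ :=
          Matrix.of fun i j => S i.succ j.succ - S 0 i.succ * S 0 j.succ / d with hS'
        have hS'psd : S'.PosSemidef := by
          set C : Matrix (Fin (n+1)) (Fin n) ℝ :=
            Matrix.of fun k j => B k j.succ - S 0 j.succ / d * B k 0 with hC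
          have : S' = Cᴴ * C := by
            ext i j
            rw [Matrix.mul_apply]
            simp only [hC, hS', Matrix.of_apply, Matrix.conjTranspose_apply, star_trivial]
            have expand : ∀ k : Fin (n+1),
                (B k i.succ - S 0 i.succ / d * B k 0) * (B k j.succ - S 0 j.succ / d * B k 0)
                = B k i.succ * B k j.succ - S 0 i.succ / d * (B k 0 * B k j.succ)
                  - S 0 j.succ / d * (B k i.succ * B k 0)
                  + (S 0 i.succ / d) * (S 0 j.succ / d) * (B k 0 * B k 0) := by
              intro k; ring
            rw [Finset.sum_congr rfl (fun k _ => expand k)]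
            rw [Finset.sum_add_distrib, Finset.sum_sub_distrib, Finset.sum_sub_distrib,
              ← Finset.mul_sum, ← Finset.mul_sum, ← Finset.mul_sum,
              ← hSe, ← hSe, ← hSe, ← hSe, ← hd]
            rw [hsymm i.succ 0]
            field_simp
            ring
          rw [this]
          exact Matrix.posSemidef_conjTranspose_mul_self C
        obtain ⟨K', A', hA', hSA'⟩ := ih S' hS'psd
        have hS'e : ∀ i j, (A' * A'ᵀ) i j = S i.succ j.succ - S 0 i.succ * S 0 j.succ / d := by
          intro i j
          rw [← hSA']
          simp [hS']
        refine ⟨insert 0 (K'.map (Fin.succEmb n)),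
          Matrix.of fun i j =>
            Fin.cases (S i 0 / s) (fun j' => Fin.cases 0 (fun i' => A' i' j') i) j,
          ⟨?_, ?_⟩, ?_⟩
        · intro i j hij
          rcases Fin.eq_zero_or_eq_succ j with rfl | ⟨j', rfl⟩
          · rcases hij with h | h
            · exact absurd h (Fin.not_lt_zero i)
            · exact absurd (Finset.mem_insert_self 0 _) h
          · rcases Fin.eq_zero_or_eq_succ i with rfl | ⟨i', rfl⟩
            · simp
            · simp only [Matrix.of_apply, Fin.cases_succ]
              rcases hij with h | h
              · exact hA'.1 i' j' (Or.inl (by simpa [Fin.succ_lt_succ_iff] using h))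
              · refine hA'.1 i' j' (Or.inr fun hc => h ?_)
                exact Finset.mem_insert_of_mem (Finset.mem_map.mpr ⟨j', hc, rfl⟩)
        · intro k hk
          rcases Fin.eq_zero_or_eq_succ k with rfl | ⟨k', rfl⟩
          · simpa [← hd, ← hss] using by positivity
          · have hk' : k' ∈ K' := by
              rcases Finset.mem_insert.mp hk with h | h
              · exact absurd h (by simp [Fin.ext_iff])
              · obtain ⟨x, hx, hxe⟩ := Finset.mem_map.mp h
                have : x = k' := by
                  simpa [Fin.ext_iff] using hxe
                exact this ▸ hx
            simpa using hA'.2 k' hk'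
        · ext i j
          rw [Matrix.mul_apply, Fin.sum_univ_succ]
          simp only [Matrix.of_apply, Fin.cases_zero, Fin.cases_succ, Matrix.transpose_apply]
          rcases Fin.eq_zero_or_eq_succ i with rfl | ⟨i', rfl⟩
          · rcases Fin.eq_zero_or_eq_succ j with rfl | ⟨j', rfl⟩
            · simp only [Fin.cases_zero, ← hd]
              rw [Finset.sum_eq_zero (fun k _ => by simp)]
              field_simp [← hss]
              rw [← hss]; ring
            · simp only [Fin.cases_zero, Fin.cases_succ]
              rw [Finset.sum_eq_zero (fun k _ => by simp)]
              rw [← hd, hsymm j'.succ 0]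
              field_simp [← hss]
              rw [← hss]; ring
          · rcases Fin.eq_zero_or_eq_succ j with rfl | ⟨j', rfl⟩
            · simp only [Fin.cases_zero, Fin.cases_succ]
              rw [Finset.sum_eq_zero (fun k _ => by simp)]
              rw [← hd, hsymm i'.succ 0]
              field_simp [← hss]
              rw [← hss]; ring
            · simp only [Fin.cases_succ]
              have : ∑ k : Fin n, A' i' k * A' j' k = (A' * A'ᵀ) i' j' := by
                rw [Matrix.mul_apply]; simp
              rw [this, hS'e, hsymm i'.succ 0, hsymm j'.succ 0]
              field_simp [← hss]
              rw [← hss]; ring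



lemma count_eq {n : ℕ} (F : Finset (Fin n)) (j : ℕ) :
    (F.filter fun i : Fin n => (i : ℕ) < j).card
      = ((Finset.univ : Finset (Fin F.card)).filter
          fun m => ((F.orderEmbOfFin rfl m : Fin n) : ℕ) < j).card := by
  rw [← Finset.card_image_of_injective _ (F.orderEmbOfFin rfl).injective]
  congr 1
  ext l
  simp only [Finset.mem_image, Finset.mem_filter, Finset.mem_univ, true_and]
  constructor
  · rintro ⟨hl, hlj⟩
    have : l ∈ Set.range (F.orderEmbOfFin rfl) := by
      rw [Finset.range_orderEmbOfFin]; exact hl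
    obtain ⟨m, hm⟩ := this
    exact ⟨m, by rw [hm]; exact hlj, hm⟩
  · rintro ⟨m, hmj, rfl⟩
    exact ⟨Finset.orderEmbOfFin_mem F rfl m, hmj⟩

lemma count_ge {n : ℕ} (F : Finset (Fin n)) (m : Fin F.card) :
    (m : ℕ) + 1 ≤
      (F.filter (fun i : Fin n => (i : ℕ) < ((F.orderEmbOfFin rfl m : Fin n) : ℕ) + 1)).card := by
  rw [count_eq]
  have hsub : Finset.Iic m ⊆ (Finset.univ : Finset (Fin F.card)).filter
      fun m' => ((F.orderEmbOfFin rfl m' : Fin n) : ℕ) < ((F.orderEmbOfFin rfl m : Fin n) : ℕ) + 1 := by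
    intro m' hm'
    rw [Finset.mem_Iic] at hm'
    refine Finset.mem_filter.mpr ⟨Finset.mem_univ _, ?_⟩
    have : F.orderEmbOfFin rfl m' ≤ F.orderEmbOfFin rfl m :=
      (F.orderEmbOfFin rfl).monotone hm'
    exact Nat.lt_succ_of_le this
  calc (m : ℕ) + 1 = (Finset.Iic m).card := by rw [Fin.card_Iic]
    _ ≤ _ := Finset.card_le_card hsub

lemma count_le {n : ℕ} (F : Finset (Fin n)) (m : Fin F.card) (k : Fin n)
    (h : k < F.orderEmbOfFin rfl m) :
    (F.filter (fun i : Fin n => (i : ℕ) < (k : ℕ) + 1)).card ≤ (m : ℕ) := by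
  rw [count_eq]
  have hsub : (Finset.univ : Finset (Fin F.card)).filter
      (fun m' => ((F.orderEmbOfFin rfl m' : Fin n) : ℕ) < (k : ℕ) + 1) ⊆ Finset.Iio m := by
    intro m' hm'
    have hle : ((F.orderEmbOfFin rfl m' : Fin n) : ℕ) < (k : ℕ) + 1 :=
      (Finset.mem_filter.mp hm').2
    rw [Finset.mem_Iio]
    by_contra hge
    push_neg at hge
    have : F.orderEmbOfFin rfl m ≤ F.orderEmbOfFin rfl m' :=
      (F.orderEmbOfFin rfl).monotone hge
    have hk : (k : ℕ) < ((F.orderEmbOfFin rfl m' : Fin n) : ℕ) :=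
      Fin.lt_def.mp (lt_of_lt_of_le h this)
    omega
  calc _ ≤ (Finset.Iio m).card := Finset.card_le_card hsub
    _ = (m : ℕ) := Fin.card_Iio m

lemma pointwise_le {n : ℕ} (L K : Finset (Fin n))
    (hK : ∀ j : ℕ, 1 ≤ j → j ≤ n →
      (K.filter fun i : Fin n => (i : ℕ) < j).card ≤ (L.filter fun i : Fin n => (i : ℕ) < j).card)
    (hc : K.card ≤ L.card) (m : Fin K.card) :
    (L.orderEmbOfFin rfl (Fin.castLE hc m) : Fin n) ≤ K.orderEmbOfFin rfl m := by
  by_contra hlt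
  push_neg at hlt
  set k : Fin n := K.orderEmbOfFin rfl m with hk
  have h1 : (m : ℕ) + 1 ≤ (K.filter fun i : Fin n => (i : ℕ) < (k : ℕ) + 1).card := count_ge K m
  have h2 : (L.filter fun i : Fin n => (i : ℕ) < (k : ℕ) + 1).card ≤ ((Fin.castLE hc m : Fin L.card) : ℕ) :=
    count_le L (Fin.castLE hc m) k hlt
  have h3 := hK ((k : ℕ) + 1) (Nat.succ_le_succ (Nat.zero_le _)) (Nat.succ_le_of_lt k.isLt)
  simp only [Fin.coe_castLE] at h2
  omega

lemma csetK_subset_closure {n : ℕ} (hn : 1 ≤ n) (L K : Finset (Fin n))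
    (hK : ∀ j : ℕ, 1 ≤ j → j ≤ n →
      (K.filter fun i : Fin n => (i : ℕ) < j).card ≤ (L.filter fun i : Fin n => (i : ℕ) < j).card) :
    CsetK n K ⊆ closure (CsetK n L) := by
  rintro S ⟨A, hA, rfl⟩
  have hc : K.card ≤ L.card := by
    have := hK n hn le_rfl
    rwa [Finset.filter_true_of_mem (fun i _ => i.isLt),
      Finset.filter_true_of_mem (fun i _ => i.isLt)] at this
  set c := K.card with hcdef
  set e : Fin c → Fin n := fun m => K.orderEmbOfFin rfl m with he
  set g : Fin c → Fin n := fun m => L.orderEmbOfFin rfl (Fin.castLE hc m) with hg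
  have hge : ∀ m, g m ≤ e m := fun m => pointwise_le L K hK hc m
  have hginj : Function.Injective g :=
    fun a b hab => Fin.castLE_injective hc ((L.orderEmbOfFin rfl).injective hab)
  have hgL : ∀ m, g m ∈ L := fun m => Finset.orderEmbOfFin_mem L rfl _
  have heK : ∀ m, e m ∈ K := fun m => Finset.orderEmbOfFin_mem K rfl _
  set B0 : Matrix (Fin n) (Fin n) ℝ :=
    Matrix.of fun i l => ∑ m : Fin c, if l = g m then A i (e m) else 0 with hB0
  set D : Matrix (Fin n) (Fin n) ℝ :=
    Matrix.of fun i l => if i = l ∧ l ∈ L then (1 : ℝ) else 0 with hD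
  -- the approximating family
  have hmem : ∀ ε : ℝ, 0 < ε → (B0 + ε • D) * (B0 + ε • D)ᵀ ∈ CsetK n L := by
    intro ε hε
    refine ⟨B0 + ε • D, ⟨?_, ?_⟩, rfl⟩
    · intro i l hil
      have hDz : D i l = 0 := by
        rw [hD]
        simp only [Matrix.of_apply, ite_eq_right_iff, one_ne_zero]
        rintro ⟨rfl, hL⟩
        rcases hil with h | h
        · exact absurd h (lt_irrefl i)
        · exact h hL
      have hBz : B0 i l = 0 := by
        rw [hB0]
        simp only [Matrix.of_apply]
        refine Finset.sum_eq_zero fun m _ => ?_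
        split_ifs with hgm
        · rcases hil with h | h
          · exact hA.1 i (e m) (Or.inl (lt_of_lt_of_le (hgm ▸ h) (hge m)))
          · exact absurd (hgm ▸ hgL m) h
        · rfl
      simp [Matrix.add_apply, Matrix.smul_apply, hDz, hBz]
    · intro l hl
      have hDd : D l l = 1 := by rw [hD]; simp [hl]
      have hBd : 0 ≤ B0 l l := by
        rw [hB0]
        simp only [Matrix.of_apply]
        refine Finset.sum_nonneg fun m _ => ?_
        split_ifs with hgm
        · rcases lt_or_eq_of_le (hge m) with h | h
          · rw [hA.1 l (e m) (Or.inl (hgm ▸ h))]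
          · rw [hgm, h]
            exact le_of_lt (hA.2 (e m) (heK m))
        · rfl
      have : (B0 + ε • D) l l = B0 l l + ε := by
        simp [Matrix.add_apply, Matrix.smul_apply, hDd]
      rw [this]
      positivity
  -- value at 0
  have hzero : (B0 + (0:ℝ) • D) * (B0 + (0:ℝ) • D)ᵀ = A * Aᵀ := by
    rw [zero_smul, add_zero]
    ext i j
    rw [Matrix.mul_apply, Matrix.mul_apply]
    simp only [Matrix.transpose_apply]
    have lhs : ∀ l, B0 i l * B0 j l
        = ∑ m : Fin c, ∑ m' : Fin c,
            (if l = g m then A i (e m) else 0) * (if l = g m' then A j (e m') else 0) := by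
      intro l
      rw [hB0]
      simp only [Matrix.of_apply]
      rw [Finset.sum_mul_sum]
    rw [Finset.sum_congr rfl fun l _ => lhs l]
    rw [Finset.sum_comm]
    have inner : ∀ m : Fin c,
        (∑ l : Fin n, ∑ m' : Fin c,
          (if l = g m then A i (e m) else 0) * (if l = g m' then A j (e m') else 0))
        = A i (e m) * A j (e m) := by
      intro m
      rw [Finset.sum_comm]
      have : ∀ m' : Fin c,
          (∑ l : Fin n, (if l = g m then A i (e m) else 0) * (if l = g m' then A j (e m') else 0))
          = if m = m' then A i (e m) * A j (e m') else 0 := by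
        intro m'
        have : ∀ l : Fin n,
            (if l = g m then A i (e m) else 0) * (if l = g m' then A j (e m') else 0)
            = if l = g m then (if l = g m' then A i (e m) * A j (e m') else 0) else 0 := by
          intro l
          split_ifs <;> simp_all
        rw [Finset.sum_congr rfl fun l _ => this l]
        rw [Finset.sum_ite_eq' Finset.univ (g m)
          (fun l => if l = g m' then A i (e m) * A j (e m') else 0)]
        simp only [Finset.mem_univ, if_true]
        by_cases hmm : m = m'
        · simp [hmm]
        · have : g m ≠ g m' := fun hgg => hmm (hginj hgg)
          simp [this, hmm]
      rw [Finset.sum_congr rfl fun m' _ => this m']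
      rw [Finset.sum_ite_eq Finset.univ m (fun m' => A i (e m) * A j (e m'))]
      simp
    rw [Finset.sum_congr rfl fun m _ => inner m]
    -- now RHS : ∑ k, A i k * A j k = ∑ m, A i (e m) * A j (e m)
    have hKsum : ∑ k : Fin n, A i k * A j k = ∑ k ∈ K, A i k * A j k := by
      refine (Finset.sum_subset (Finset.subset_univ K) ?_).symm
      intro k _ hk
      rw [hA.1 i k (Or.inr hk), zero_mul]
    rw [hKsum]
    rw [← Finset.sum_coe_sort K (fun k => A i k * A j k)]
    exact (Fintype.sum_equiv (K.orderIsoOfFin rfl).toEquiv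
      (fun m => A i (e m) * A j (e m)) (fun x => A i x * A j x)
      (fun m => by rw [he]; simp [Finset.coe_orderIsoOfFin_apply])).symm ▸ rfl
  -- continuity and passage to the limit
  have hcont : Continuous fun ε : ℝ => (B0 + ε • D) * (B0 + ε • D)ᵀ := by
    have h1 : Continuous fun ε : ℝ => B0 + ε • D :=
      continuous_const.add (continuous_id.smul continuous_const)
    exact h1.matrix_mul h1.matrix_transpose
  have htend : Filter.Tendsto (fun ε : ℝ => (B0 + ε • D) * (B0 + ε • D)ᵀ)
      (nhdsWithin 0 (Set.Ioi 0)) (nhds (A * Aᵀ)) := by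
    rw [← hzero]
    exact (hcont.tendsto 0).mono_left nhdsWithin_le_nhds
  refine mem_closure_of_tendsto htend ?_
  filter_upwards [self_mem_nhdsWithin] with ε hε
  exact hmem ε hε



lemma isClosed_psd (n : ℕ) : IsClosed {S : Matrix (Fin n) (Fin n) ℝ | S.PosSemidef} := by
  have heq : {S : Matrix (Fin n) (Fin n) ℝ | S.PosSemidef} =
      {S : Matrix (Fin n) (Fin n) ℝ | Sᴴ = S} ∩
        ⋂ x : Fin n → ℝ, {S | 0 ≤ dotProduct (star x) (S *ᵥ x)} := by
    ext S
    simp only [Set.mem_setOf_eq, Set.mem_inter_iff, Set.mem_iInter]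
    exact Matrix.posSemidef_iff_dotProduct_mulVec
  rw [heq]
  refine IsClosed.inter ?_ (isClosed_iInter fun x => ?_)
  · exact isClosed_eq (continuous_id.matrix_conjTranspose) continuous_id
  · exact isClosed_le continuous_const
      (continuous_const.dotProduct (continuous_id.matrix_mulVec continuous_const))

lemma csetK_psd {n : ℕ} {K : Finset (Fin n)} {S : Matrix (Fin n) (Fin n) ℝ}
    (hS : S ∈ CsetK n K) : S.PosSemidef := by
  obtain ⟨A, _, rfl⟩ := hS
  have : Aᵀ = Aᴴ := (Matrix.conjTranspose_eq_transpose_of_trivial A).symm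
  rw [this]
  exact Matrix.posSemidef_self_mul_conjTranspose A

lemma det_zero_of_mem {n : ℕ} (L : Finset (Fin n)) (j : ℕ) (J : Finset (Fin n))
    (hJlt : ∀ s ∈ J, (s : ℕ) < j)
    (hcard : (L.filter fun i : Fin n => (i : ℕ) < j).card < J.card)
    {T : Matrix (Fin n) (Fin n) ℝ} (hT : T ∈ CsetK n L) :
    (T.submatrix (fun s : {x // x ∈ J} => (s : Fin n)) (fun s : {x // x ∈ J} => (s : Fin n))).det
      = 0 := by
  obtain ⟨B, hB, rfl⟩ := hT
  set Lf := L.filter fun i : Fin n => (i : ℕ) < j with hLf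
  set M : Matrix {x // x ∈ J} (Fin n) ℝ :=
    B.submatrix (fun s : {x // x ∈ J} => (s : Fin n)) id with hM
  have hfact : (B * Bᵀ).submatrix (fun s : {x // x ∈ J} => (s : Fin n))
      (fun s : {x // x ∈ J} => (s : Fin n)) = M * Mᵀ := by
    ext s t
    simp [Matrix.mul_apply, hM]
  set N : Matrix {x // x ∈ J} {x // x ∈ Lf} ℝ :=
    B.submatrix (fun s : {x // x ∈ J} => (s : Fin n)) (fun l : {x // x ∈ Lf} => (l : Fin n))
    with hN
  have hninj : ¬ Function.Injective Nᵀ.mulVecLin := by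
    intro hinj
    have hfr := LinearMap.finrank_le_finrank_of_injective hinj
    rw [Module.finrank_pi, Module.finrank_pi, Fintype.card_coe, Fintype.card_coe] at hfr
    omega
  have hker : ∃ v : {x // x ∈ J} → ℝ, v ≠ 0 ∧ Nᵀ.mulVecLin v = 0 := by
    by_contra hcon
    push_neg at hcon
    refine hninj ((LinearMap.ker_eq_bot (f := Nᵀ.mulVecLin)).mp ?_)
    rw [Submodule.eq_bot_iff]
    intro v hv
    by_contra hv0
    exact (hcon v hv0) hv
  obtain ⟨v, hv0, hvker⟩ := hker
  have hMtv : Mᵀ *ᵥ v = 0 := by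
    funext k
    by_cases hk : k ∈ Lf
    · have := congrFun hvker ⟨k, hk⟩
      simpa [Matrix.mulVecLin_apply, Matrix.mulVec, dotProduct, hN, hM] using this
    · have hBz : ∀ s : {x // x ∈ J}, B (s : Fin n) k = 0 := by
        intro s
        rw [hLf, Finset.mem_filter] at hk
        push_neg at hk
        by_cases hkL : k ∈ L
        · have hjk : j ≤ (k : ℕ) := hk hkL
          have : (s : Fin n) < k := by
            rw [Fin.lt_def]
            exact lt_of_lt_of_le (hJlt s s.2) hjk
          exact hB.1 _ _ (Or.inl this)
        · exact hB.1 _ _ (Or.inr hkL)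
      simp only [Matrix.mulVec, dotProduct, Matrix.transpose_apply, Pi.zero_apply]
      refine Finset.sum_eq_zero fun s _ => ?_
      rw [hM]
      simp [hBz]
  rw [hfact]
  refine (Matrix.exists_mulVec_eq_zero_iff).mp ⟨v, hv0, ?_⟩
  rw [← Matrix.mulVec_mulVec, hMtv, Matrix.mulVec_zero]

lemma det_ne_zero_chol {n : ℕ} {K : Finset (Fin n)} {A : Matrix (Fin n) (Fin n) ℝ}
    (hA : MemMK n K A) (J : Finset (Fin n)) (hJK : ∀ s ∈ J, s ∈ K) :
    (((A * Aᵀ).submatrix (fun s : {x // x ∈ J} => (s : Fin n))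
      (fun s : {x // x ∈ J} => (s : Fin n))).det) ≠ 0 := by
  set M : Matrix {x // x ∈ J} (Fin n) ℝ :=
    A.submatrix (fun s : {x // x ∈ J} => (s : Fin n)) id with hM
  have hfact : (A * Aᵀ).submatrix (fun s : {x // x ∈ J} => (s : Fin n))
      (fun s : {x // x ∈ J} => (s : Fin n)) = M * Mᵀ := by
    ext s t
    simp [Matrix.mul_apply, hM]
  rw [hfact]
  intro h0
  obtain ⟨v, hv0, hv⟩ := (Matrix.exists_mulVec_eq_zero_iff).mpr h0
  have hw : Matrix.vecMul v M = 0 := by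
    have h1 : dotProduct v ((M * Mᵀ) *ᵥ v) = 0 := by rw [hv, dotProduct_zero]
    have h2 : dotProduct v ((M * Mᵀ) *ᵥ v)
        = dotProduct (Matrix.vecMul v M) (Matrix.vecMul v M) := by
      rw [← Matrix.mulVec_mulVec, dotProduct_mulVec]
      congr 1
      rw [Matrix.mulVec_transpose]
    rw [h2] at h1
    exact dotProduct_self_eq_zero.mp h1
  -- take the maximal element of the support of v
  have hsupne : (Finset.univ.filter fun s => v s ≠ 0).Nonempty := by
    obtain ⟨s, hs⟩ := Function.ne_iff.mp hv0
    exact ⟨s, Finset.mem_filter.mpr ⟨Finset.mem_univ s, hs⟩⟩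
  set s0 := (Finset.univ.filter fun s => v s ≠ 0).max' hsupne with hs0
  have hvs0 : v s0 ≠ 0 := (Finset.mem_filter.mp ((Finset.univ.filter fun s => v s ≠ 0).max'_mem hsupne)).2
  have hcol : Matrix.vecMul v M (s0 : Fin n) = A (s0 : Fin n) (s0 : Fin n) * v s0 := by
    rw [Matrix.vecMul, dotProduct]
    rw [Finset.sum_eq_single s0]
    · rw [hM]; simp [mul_comm]
    · intro b _ hb
      by_cases hvb : v b = 0
      · rw [hvb, zero_mul]
      · have hble : b ≤ s0 := Finset.le_max' _ b (Finset.mem_filter.mpr ⟨Finset.mem_univ b, hvb⟩)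
        have hblt : (b : Fin n) < (s0 : Fin n) := lt_of_le_of_ne
          (Subtype.coe_le_coe.mpr hble) (fun hc => hb (Subtype.ext hc))
        rw [hM]
        simp only [Matrix.submatrix_apply, id_eq]
        rw [hA.1 _ _ (Or.inl hblt), mul_zero]
    · intro hns0
      exact absurd (Finset.mem_univ s0) hns0
  rw [hw] at hcol
  have : A (s0 : Fin n) (s0 : Fin n) * v s0 ≠ 0 :=
    mul_ne_zero (ne_of_gt (hA.2 _ (hJK _ s0.2))) hvs0
  exact this hcol.symm

theorem stmt10 (n : ℕ) (hn : 1 ≤ n) (L : Finset (Fin n)) :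
    closure (CsetK n L) =
      ⋃ K ∈ {K : Finset (Fin n) | ∀ j : ℕ, 1 ≤ j → j ≤ n →
          (K.filter (fun i : Fin n => (i : ℕ) < j)).card ≤ (L.filter (fun i : Fin n => (i : ℕ) < j)).card},
        CsetK n K := by
  apply Set.Subset.antisymm
  · intro S hS
    have hpsd : S.PosSemidef :=
      closure_minimal (fun T hT => csetK_psd hT) (isClosed_psd n) hS
    obtain ⟨K, A, hA, hSA⟩ := cholesky n S hpsd
    have hcond : ∀ j : ℕ, 1 ≤ j → j ≤ n →
        (K.filter (fun i : Fin n => (i : ℕ) < j)).card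
          ≤ (L.filter (fun i : Fin n => (i : ℕ) < j)).card := by
      intro j h1 h2
      by_contra hlt
      push_neg at hlt
      obtain ⟨J, hJsub, hJcard⟩ := Finset.exists_subset_card_eq
        (Nat.succ_le_of_lt hlt : (L.filter (fun i : Fin n => (i : ℕ) < j)).card + 1
          ≤ (K.filter (fun i : Fin n => (i : ℕ) < j)).card)
      have hJlt : ∀ s ∈ J, (s : ℕ) < j := fun s hs => (Finset.mem_filter.mp (hJsub hs)).2
      have hJK : ∀ s ∈ J, s ∈ K := fun s hs => (Finset.mem_filter.mp (hJsub hs)).1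
      have hcard' : (L.filter (fun i : Fin n => (i : ℕ) < j)).card < J.card := by omega
      have hclosed : IsClosed {T : Matrix (Fin n) (Fin n) ℝ |
          (T.submatrix (fun s : {x // x ∈ J} => (s : Fin n))
            (fun s : {x // x ∈ J} => (s : Fin n))).det = 0} :=
        isClosed_eq ((continuous_id.matrix_submatrix _ _).matrix_det) continuous_const
      have hzero : (S.submatrix (fun s : {x // x ∈ J} => (s : Fin n))
          (fun s : {x // x ∈ J} => (s : Fin n))).det = 0 :=
        closure_minimal (fun T hT => det_zero_of_mem L j J hJlt hcard' hT) hclosed hS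
      rw [hSA] at hzero
      exact det_ne_zero_chol hA J hJK hzero
    exact Set.mem_biUnion hcond ⟨A, hA, hSA⟩
  · exact Set.iUnion₂_subset fun K hK => csetK_subset_closure hn L K hK
end

section
/- Let n ≥ 1 and set N = n(n+1)/2. The set Q̄ = {B : B is an n×n real matrix, Bᵀ = B, and I − B·B is positive semi-definite}, with the topology induced from the space of n×n real matrices, is homeomorphic to the closed unit ball in ℝ^N (equivalently, to a closed ball of dimension N). -/
open Matrix

namespace Stmt12Aux

variable {n : ℕ}

/-- The quadratic (operator-norm ≤ 1) condition. -/
def quad (B : Matrix (Fin n) (Fin n) ℝ) : Prop :=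
  ∀ x : Fin n → ℝ, (B *ᵥ x) ⬝ᵥ (B *ᵥ x) ≤ x ⬝ᵥ x

lemma vecMul_eq (B : Matrix (Fin n) (Fin n) ℝ) (hB : Bᵀ = B) (x : Fin n → ℝ) :
    x ᵥ* B = B *ᵥ x := by
  conv_lhs => rw [← hB]
  rw [vecMul_transpose]

lemma key (B : Matrix (Fin n) (Fin n) ℝ) (hB : Bᵀ = B) (x : Fin n → ℝ) :
    x ⬝ᵥ ((1 - B * B) *ᵥ x) = x ⬝ᵥ x - (B *ᵥ x) ⬝ᵥ (B *ᵥ x) := by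
  rw [sub_mulVec, dotProduct_sub, one_mulVec, ← mulVec_mulVec, dotProduct_mulVec,
    vecMul_eq B hB]

lemma star_eq (x : Fin n → ℝ) : star x = x := by
  funext i; simp

lemma herm (B : Matrix (Fin n) (Fin n) ℝ) (hB : Bᵀ = B) : (1 - B * B).IsHermitian := by
  rw [Matrix.IsHermitian, conjTranspose_eq_transpose_of_trivial, transpose_sub,
    transpose_one, transpose_mul, hB]

lemma mem_iff (B : Matrix (Fin n) (Fin n) ℝ) :
    (Bᵀ = B ∧ (1 - B * B).PosSemidef) ↔ (Bᵀ = B ∧ quad B) := by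
  rw [posSemidef_iff_dotProduct_mulVec]
  constructor
  · rintro ⟨h1, h2, h3⟩
    refine ⟨h1, fun x => ?_⟩
    have := h3 x
    rw [star_eq, key B h1 x] at this
    linarith
  · rintro ⟨h1, h2⟩
    refine ⟨h1, herm B h1, fun x => ?_⟩
    rw [star_eq, key B h1 x]
    linarith [h2 x]


def S (n : ℕ) : Set (Matrix (Fin n) (Fin n) ℝ) := {B | Bᵀ = B ∧ quad B}

lemma dot_self_nonneg (u : Fin n → ℝ) : 0 ≤ u ⬝ᵥ u :=
  Finset.sum_nonneg fun i _ => mul_self_nonneg _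

lemma cs (u v : Fin n → ℝ) : (u ⬝ᵥ v) ^ 2 ≤ (u ⬝ᵥ u) * (v ⬝ᵥ v) := by
  have := Finset.sum_mul_sq_le_sq_mul_sq Finset.univ u v
  simpa [dotProduct, sq, Finset.mul_sum, mul_comm, mul_assoc, mul_left_comm] using this

lemma S_convex (n : ℕ) : Convex ℝ (S n) := by
  rintro B ⟨hB1, hB2⟩ C ⟨hC1, hC2⟩ a b ha hb hab
  constructor
  · simp [transpose_add, transpose_smul, hB1, hC1]
  · intro x
    have hmv : (a • B + b • C) *ᵥ x = a • (B *ᵥ x) + b • (C *ᵥ x) := by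
      rw [add_mulVec, smul_mulVec, smul_mulVec]
    set u := B *ᵥ x
    set v := C *ᵥ x
    have hu : u ⬝ᵥ u ≤ x ⬝ᵥ x := hB2 x
    have hv : v ⬝ᵥ v ≤ x ⬝ᵥ x := hC2 x
    have hcs := cs u v
    have hu0 := dot_self_nonneg u
    have hv0 := dot_self_nonneg v
    have ht0 := dot_self_nonneg x
    have hexp : (a • u + b • v) ⬝ᵥ (a • u + b • v)
        = a * a * (u ⬝ᵥ u) + 2 * (a * b) * (u ⬝ᵥ v) + b * b * (v ⬝ᵥ v) := by
      simp only [add_dotProduct, dotProduct_add, smul_dotProduct, dotProduct_smul,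
        smul_eq_mul, dotProduct_comm v u]
      ring
    rw [hmv, hexp]
    have huv : u ⬝ᵥ v ≤ x ⬝ᵥ x := by nlinarith
    have habsq : (a * a + 2 * (a * b) + b * b) * (x ⬝ᵥ x) = x ⬝ᵥ x := by
      rw [show a * a + 2 * (a * b) + b * b = (a + b) ^ 2 by ring, hab, one_pow, one_mul]
    nlinarith [habsq, mul_nonneg (mul_nonneg ha ha) (sub_nonneg.2 hu),
      mul_nonneg (mul_nonneg hb hb) (sub_nonneg.2 hv),
      mul_nonneg (mul_nonneg ha hb) (sub_nonneg.2 huv)]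

lemma S_entry_bound {B : Matrix (Fin n) (Fin n) ℝ} (h : quad B) (i j : Fin n) :
    B i j ∈ Set.Icc (-1 : ℝ) 1 := by
  have h1 := h (Pi.single j 1)
  rw [show B *ᵥ Pi.single j 1 = fun k => B k j * 1 by
    ext k; simp [mulVec, dotProduct, Pi.single_apply]] at h1
  have h2 : (Pi.single j 1 : Fin n → ℝ) ⬝ᵥ Pi.single j 1 = 1 := by
    rw [dotProduct_single]; simp
  rw [h2] at h1
  have h3 : (B i j * 1) * (B i j * 1) ≤ (fun k => B k j * 1) ⬝ᵥ (fun k => B k j * 1) := by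
    exact Finset.single_le_sum (f := fun k => (B k j * 1) * (B k j * 1))
      (fun k _ => mul_self_nonneg _) (Finset.mem_univ i)
  constructor <;> nlinarith

lemma S_isClosed (n : ℕ) : IsClosed (S n) := by
  have h1 : IsClosed {B : Matrix (Fin n) (Fin n) ℝ | Bᵀ = B} :=
    isClosed_eq (continuous_id.matrix_transpose) continuous_id
  have h2 : IsClosed {B : Matrix (Fin n) (Fin n) ℝ | quad B} := by
    have : {B : Matrix (Fin n) (Fin n) ℝ | quad B}
        = ⋂ x : Fin n → ℝ, {B | (B *ᵥ x) ⬝ᵥ (B *ᵥ x) ≤ x ⬝ᵥ x} := by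
      ext B; simp [quad, Set.mem_iInter]
    rw [this]
    refine isClosed_iInter fun x => isClosed_le ?_ continuous_const
    exact (continuous_id.matrix_mulVec continuous_const).dotProduct
      (continuous_id.matrix_mulVec continuous_const)
  exact h1.inter h2

lemma S_isCompact (n : ℕ) : IsCompact (S n) := by
  have hK : IsCompact {B : Matrix (Fin n) (Fin n) ℝ | ∀ i j, B i j ∈ Set.Icc (-1 : ℝ) 1} := by
    have : {B : Matrix (Fin n) (Fin n) ℝ | ∀ i j, B i j ∈ Set.Icc (-1 : ℝ) 1}
        = Set.univ.pi fun _ : Fin n => Set.univ.pi fun _ : Fin n => Set.Icc (-1 : ℝ) 1 := by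
      ext B
      constructor
      · exact fun hc i _ j _ => hc i j
      · exact fun hc i j => hc i (Set.mem_univ i) j (Set.mem_univ j)
    rw [this]
    exact isCompact_univ_pi fun _ => isCompact_univ_pi fun _ => isCompact_Icc
  exact hK.of_isClosed_subset (S_isClosed n) fun B hB i j => S_entry_bound hB.2 i j

lemma small_mem_S {B : Matrix (Fin n) (Fin n) ℝ} (hB : Bᵀ = B)
    (h : ∀ i j, |B i j| < 1 / n) (hn : 1 ≤ n) : B ∈ S n := by
  refine ⟨hB, fun x => ?_⟩
  have hnpos : (0 : ℝ) < n := by exact_mod_cast hn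
  have hrow : ∀ i, (∑ j, B i j * x j) ^ 2 ≤ (1 / n) * (x ⬝ᵥ x) := by
    intro i
    have hc := Finset.sum_mul_sq_le_sq_mul_sq Finset.univ (fun j => B i j) x
    have hb : (∑ j, B i j ^ 2) ≤ n * (1 / n) ^ 2 := by
      have : ∀ j : Fin n, B i j ^ 2 ≤ (1 / n) ^ 2 := fun j => by
        have := h i j; nlinarith [abs_nonneg (B i j), le_abs_self (B i j), neg_abs_le (B i j)]
      calc (∑ j, B i j ^ 2) ≤ ∑ _j : Fin n, (1 / (n:ℝ)) ^ 2 :=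
            Finset.sum_le_sum fun j _ => this j
        _ = n * (1 / n) ^ 2 := by simp [mul_comm]
    have hx2 : (∑ j, x j ^ 2) = x ⬝ᵥ x := by simp [dotProduct, sq]
    have hxx := dot_self_nonneg x
    calc (∑ j, B i j * x j) ^ 2 ≤ (∑ j, B i j ^ 2) * (∑ j, x j ^ 2) := hc
      _ ≤ (n * (1 / n) ^ 2) * (x ⬝ᵥ x) := by
          rw [hx2]; exact mul_le_mul_of_nonneg_right hb hxx
      _ = (1 / n) * (x ⬝ᵥ x) := by field_simp
  have : (B *ᵥ x) ⬝ᵥ (B *ᵥ x) = ∑ i, (∑ j, B i j * x j) ^ 2 := by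
    simp [dotProduct, mulVec, sq]
  rw [this]
  calc (∑ i, (∑ j, B i j * x j) ^ 2) ≤ ∑ _i : Fin n, (1 / (n:ℝ)) * (x ⬝ᵥ x) :=
        Finset.sum_le_sum fun i _ => hrow i
    _ = n * ((1 / n) * (x ⬝ᵥ x)) := by simp [mul_comm]
    _ = x ⬝ᵥ x := by field_simp


def symSub (n : ℕ) : Submodule ℝ (Matrix (Fin n) (Fin n) ℝ) where
  carrier := {B | Bᵀ = B}
  add_mem' := fun {a b} ha hb => by
    simp only [Set.mem_setOf_eq] at *; rw [transpose_add, ha, hb]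
  zero_mem' := by simp only [Set.mem_setOf_eq, transpose_zero]
  smul_mem' := fun c {a} ha => by
    simp only [Set.mem_setOf_eq] at *; rw [transpose_smul, ha]

noncomputable def symLinEquiv (n : ℕ) : symSub n ≃ₗ[ℝ] ({ p : Fin n × Fin n // p.1 ≤ p.2 } → ℝ) where
  toFun B p := B.1 p.1.1 p.1.2
  map_add' B C := rfl
  map_smul' c B := rfl
  invFun f := ⟨(fun i j => if h : i ≤ j then f ⟨(i, j), h⟩ else f ⟨(j, i), (not_le.1 h).le⟩ :
      Matrix (Fin n) (Fin n) ℝ), by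
    ext i j
    show (if h : j ≤ i then f ⟨(j, i), h⟩ else f ⟨(i, j), (not_le.1 h).le⟩)
        = (if h : i ≤ j then f ⟨(i, j), h⟩ else f ⟨(j, i), (not_le.1 h).le⟩)
    by_cases h1 : i ≤ j <;> by_cases h2 : j ≤ i
    · have : i = j := le_antisymm h1 h2
      subst this; rfl
    · rw [dif_neg h2, dif_pos h1]
    · rw [dif_pos h2, dif_neg h1]
    · exact absurd (le_total i j) (by simp [h1, h2])⟩
  left_inv B := by
    apply Subtype.ext
    funext i j
    show (if h : i ≤ j then B.1 i j else B.1 j i) = B.1 i j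
    by_cases h : i ≤ j
    · rw [dif_pos h]
    · rw [dif_neg h]
      exact congrFun (congrFun B.2 i) j
  right_inv f := by
    funext p
    obtain ⟨⟨i, j⟩, h⟩ := p
    show (if h' : i ≤ j then f ⟨(i, j), h'⟩ else f ⟨(j, i), (not_le.1 h').le⟩) = f ⟨(i, j), h⟩
    rw [dif_pos h]

lemma card_idx (n : ℕ) :
    Fintype.card { p : Fin n × Fin n // p.1 ≤ p.2 } = n * (n + 1) / 2 := by
  rw [← Fintype.card_congr (Sym2.sortEquiv (α := Fin n)), Sym2.card, Fintype.card_fin,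
    Nat.choose_two_right, Nat.add_sub_cancel, Nat.mul_comm]

lemma finrank_symSub (n : ℕ) :
    Module.finrank ℝ (symSub n) = n * (n + 1) / 2 := by
  rw [(symLinEquiv n).finrank_eq, Module.finrank_pi, card_idx]

noncomputable def eL (n : ℕ) :
    symSub n ≃L[ℝ] EuclideanSpace ℝ (Fin (n * (n + 1) / 2)) :=
  (LinearEquiv.ofFinrankEq _ _
    (by rw [finrank_symSub, finrank_euclideanSpace_fin])).toContinuousLinearEquiv

end Stmt12Aux

open Stmt12Aux in
theorem stmt12 (n : ℕ) (hn : 1 ≤ n) :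
    Nonempty
      (({B : Matrix (Fin n) (Fin n) ℝ | Bᵀ = B ∧ (1 - B * B).PosSemidef} : Set _) ≃ₜ
        (Metric.closedBall (0 : EuclideanSpace ℝ (Fin (n * (n + 1) / 2))) 1 : Set _)) := by
  classical
  have hSet : {B : Matrix (Fin n) (Fin n) ℝ | Bᵀ = B ∧ (1 - B * B).PosSemidef} = S n :=
    Set.ext fun B => mem_iff B
  set S' : Set (symSub n) := Subtype.val ⁻¹' S n with hS'def
  -- step 1 : S n ≃ₜ S'
  have hmem : ∀ B : Matrix (Fin n) (Fin n) ℝ, B ∈ S n → Bᵀ = B := fun B hB => hB.1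
  let e1 : ↥(S n) ≃ₜ ↥S' :=
    { toFun := fun B => ⟨⟨B.1, hmem B.1 B.2⟩, B.2⟩
      invFun := fun B => ⟨B.1.1, B.2⟩
      left_inv := fun B => rfl
      right_inv := fun B => rfl
      continuous_toFun := by
        apply Continuous.subtype_mk
        exact Continuous.subtype_mk continuous_subtype_val _
      continuous_invFun := (continuous_subtype_val.comp continuous_subtype_val).subtype_mk _ }
  -- step 2 : S' ≃ₜ T
  let eH := (eL n).toHomeomorph
  let T : Set (EuclideanSpace ℝ (Fin (n * (n + 1) / 2))) := eH '' S'
  let e2 : ↥S' ≃ₜ ↥T := eH.image S'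
  -- properties of T
  have hS'conv : Convex ℝ S' := (S_convex n).linear_preimage (symSub n).subtype
  have hTconv : Convex ℝ T := by
    have := hS'conv.linear_image (eL n).toLinearEquiv.toLinearMap; exact this
  have hVclosed : IsClosed ((symSub n : Set (Matrix (Fin n) (Fin n) ℝ))) :=
    Submodule.closed_of_finiteDimensional _
  have hce := hVclosed.isClosedEmbedding_subtypeVal
  have hS'cpt : IsCompact S' := hce.isCompact_preimage (S_isCompact n)
  have hTcpt : IsCompact T := hS'cpt.image eH.continuous
  have hTbdd : Bornology.IsBounded T := hTcpt.isBounded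
  have hTclosed : IsClosed T := hTcpt.isClosed
  -- interior of S' is nonempty
  have hnpos : (0 : ℝ) < 1 / n := by
    have : (0 : ℝ) < n := by exact_mod_cast hn
    positivity
  have hUopen : IsOpen {B : symSub n | ∀ i j, |(B : Matrix (Fin n) (Fin n) ℝ) i j| < 1 / n} := by
    have : {B : symSub n | ∀ i j, |(B : Matrix (Fin n) (Fin n) ℝ) i j| < 1 / n}
        = ⋂ i, ⋂ j, {B : symSub n | |(B : Matrix (Fin n) (Fin n) ℝ) i j| < 1 / n} := by
      ext B; simp
    rw [this]
    exact isOpen_iInter_of_finite fun i => isOpen_iInter_of_finite fun j =>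
      isOpen_lt (((continuous_subtype_val (p := fun B : Matrix (Fin n) (Fin n) ℝ => B ∈ symSub n)).matrix_elem i j).abs) continuous_const
  have hUsub : {B : symSub n | ∀ i j, |(B : Matrix (Fin n) (Fin n) ℝ) i j| < 1 / n} ⊆ S' :=
    fun B hB => small_mem_S B.2 hB hn
  have h0U : (0 : symSub n) ∈
      {B : symSub n | ∀ i j, |(B : Matrix (Fin n) (Fin n) ℝ) i j| < 1 / n} := by
    intro i j
    simp only [ZeroMemClass.coe_zero, Matrix.zero_apply, abs_zero]
    exact hnpos
  have hS'int : (interior S').Nonempty := ⟨0, interior_maximal hUsub hUopen h0U⟩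
  have hTint : (interior T).Nonempty := by
    rw [show interior T = eH '' interior S' from (eH.image_interior S').symm]
    exact hS'int.image _
  -- gauge rescaling homeomorphism
  obtain ⟨h, -, h2, -⟩ :=
    exists_homeomorph_image_interior_closure_frontier_eq_unitBall hTconv hTint hTbdd
  rw [hTclosed.closure_eq] at h2
  let e3 : ↥T ≃ₜ ↥(Metric.closedBall (0 : EuclideanSpace ℝ (Fin (n * (n + 1) / 2))) 1) :=
    (h.image T).trans (Homeomorph.setCongr h2)
  exact ⟨((Homeomorph.setCongr hSet).trans e1).trans (e2.trans e3)⟩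
end

section
/- Let n ≥ 1 and set N = n(n+1)/2. The set Q̄ ∖ Q = {B : B is an n×n real matrix, Bᵀ = B, I − B·B is positive semi-definite, and I − B·B is not positive definite}, with the topology induced from the space of n×n real matrices, is homeomorphic to a sphere of dimension N − 1 (the unit sphere in ℝ^N). -/
set_option synthInstance.maxHeartbeats 1000000
set_option maxHeartbeats 1000000

open Matrix

namespace Stmt13Aux

variable {n : ℕ}

noncomputable def toCLM (n : ℕ) :
    Matrix (Fin n) (Fin n) ℝ →ₗ[ℝ] (EuclideanSpace ℝ (Fin n) →L[ℝ] EuclideanSpace ℝ (Fin n)) :=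
  (LinearMap.toContinuousLinearMap :
      (EuclideanSpace ℝ (Fin n) →ₗ[ℝ] EuclideanSpace ℝ (Fin n)) ≃ₗ[ℝ] _).toLinearMap ∘ₗ
    (Matrix.toEuclideanLin :
      Matrix (Fin n) (Fin n) ℝ ≃ₗ[ℝ] _).toLinearMap

lemma toCLM_apply (B : Matrix (Fin n) (Fin n) ℝ) (x : Fin n → ℝ) :
    toCLM n B ((WithLp.equiv 2 (Fin n → ℝ)).symm x)
      = (WithLp.equiv 2 (Fin n → ℝ)).symm (B *ᵥ x) := rfl

lemma toCLM_inj : Function.Injective (toCLM n) := by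
  intro A B h
  have : Matrix.toEuclideanLin A = Matrix.toEuclideanLin B := by
    have := congrArg (LinearMap.toContinuousLinearMap :
      (EuclideanSpace ℝ (Fin n) →ₗ[ℝ] EuclideanSpace ℝ (Fin n)) ≃ₗ[ℝ] _).symm h
    simpa [toCLM] using this
  exact Matrix.toEuclideanLin.injective this

noncomputable def opN (B : Matrix (Fin n) (Fin n) ℝ) : ℝ := ‖toCLM n B‖

lemma opN_nonneg (B : Matrix (Fin n) (Fin n) ℝ) : 0 ≤ opN B := norm_nonneg _

lemma opN_smul (c : ℝ) (B : Matrix (Fin n) (Fin n) ℝ) : opN (c • B) = |c| * opN B := by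
  rw [opN, opN, _root_.map_smul, norm_smul c ((toCLM n) B), Real.norm_eq_abs]

lemma opN_pos {B : Matrix (Fin n) (Fin n) ℝ} (hB : B ≠ 0) : 0 < opN B := by
  rw [opN, norm_pos_iff]
  intro h
  exact hB (toCLM_inj (by simpa using h))

lemma dot_self_eq (v : Fin n → ℝ) :
    v ⬝ᵥ v = ‖(WithLp.equiv 2 (Fin n → ℝ)).symm v‖ ^ 2 := by
  rw [← real_inner_self_eq_norm_sq]
  rw [real_inner_self_eq_norm_sq, EuclideanSpace.norm_eq, Real.sq_sqrt (by positivity)]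
  simp [dotProduct, sq]

lemma qf_eq {B : Matrix (Fin n) (Fin n) ℝ} (hB : Bᵀ = B) (x : Fin n → ℝ) :
    x ⬝ᵥ (1 - B * B) *ᵥ x
      = ‖(WithLp.equiv 2 (Fin n → ℝ)).symm x‖ ^ 2
        - ‖toCLM n B ((WithLp.equiv 2 (Fin n → ℝ)).symm x)‖ ^ 2 := by
  rw [toCLM_apply, ← dot_self_eq, ← dot_self_eq]
  rw [Matrix.sub_mulVec, Matrix.one_mulVec, dotProduct_sub, ← Matrix.mulVec_mulVec,
    Matrix.dotProduct_mulVec x B, ← Matrix.mulVec_transpose, hB]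


lemma herm {B : Matrix (Fin n) (Fin n) ℝ} (hB : Bᵀ = B) : (1 - B * B).IsHermitian := by
  rw [Matrix.IsHermitian, conjTranspose_eq_transpose_of_trivial, transpose_sub, transpose_mul,
    hB, transpose_one]

lemma sq_norm_le {a b : ℝ} (ha : 0 ≤ a) (hb : 0 ≤ b) (h : a ^ 2 ≤ b ^ 2) : a ≤ b := by
  nlinarith [sq_nonneg (a - b), sq_nonneg (a + b)]

lemma char {B : Matrix (Fin n) (Fin n) ℝ} (hn : 1 ≤ n) (hB : Bᵀ = B) :
    ((1 - B * B).PosSemidef ∧ ¬(1 - B * B).PosDef) ↔ opN B = 1 := by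
  set f := toCLM n B with hf
  have hqf : ∀ y : EuclideanSpace ℝ (Fin n),
      (WithLp.equiv 2 (Fin n → ℝ)) y ⬝ᵥ (1 - B * B) *ᵥ (WithLp.equiv 2 (Fin n → ℝ)) y
        = ‖y‖ ^ 2 - ‖f y‖ ^ 2 := by
    intro y
    have := qf_eq hB ((WithLp.equiv 2 (Fin n → ℝ)) y)
    simpa using this
  have hstar : ∀ x : Fin n → ℝ, star x = x := fun x => star_trivial x
  constructor
  · rintro ⟨hpsd, hnpd⟩
    have hle : ‖f‖ ≤ 1 := by
      apply ContinuousLinearMap.opNorm_le_bound _ zero_le_one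
      intro y
      have h := hpsd.dotProduct_mulVec_nonneg ((WithLp.equiv 2 (Fin n → ℝ)) y)
      rw [hstar, hqf, sub_nonneg] at h
      rw [one_mul]
      exact sq_norm_le (norm_nonneg _) (norm_nonneg _) h
    have hge : 1 ≤ ‖f‖ := by
      rw [Matrix.posDef_iff_dotProduct_mulVec] at hnpd
      push_neg at hnpd
      obtain ⟨x, hx, hxle⟩ := hnpd (herm hB)
      rw [hstar x] at hxle
      set y := (WithLp.equiv 2 (Fin n → ℝ)).symm x with hy
      have hyx : (WithLp.equiv 2 (Fin n → ℝ)) y = x := rfl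
      have hy0 : y ≠ 0 := by
        intro h0
        apply hx
        rw [← hyx, h0]; rfl
      have h1 := hpsd.dotProduct_mulVec_nonneg x
      rw [hstar, ← hyx, hqf] at h1
      rw [← hyx, hqf] at hxle
      have heq : ‖f y‖ ^ 2 = ‖y‖ ^ 2 := by nlinarith
      have hny : 0 < ‖y‖ := norm_pos_iff.mpr hy0
      have hb := f.le_opNorm y
      have : ‖f y‖ = ‖y‖ := by
        have := sq_norm_le (norm_nonneg (f y)) (norm_nonneg y) heq.le
        have := sq_norm_le (norm_nonneg y) (norm_nonneg (f y)) heq.ge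
        linarith
      rw [this] at hb
      exact le_of_mul_le_mul_right (by linarith) hny
    rw [opN, ← hf]; linarith
  · intro hop
    have hpsd : (1 - B * B).PosSemidef := by
      refine Matrix.PosSemidef.of_dotProduct_mulVec_nonneg (herm hB) (fun x => ?_)
      rw [hstar]
      have hyx : x = (WithLp.equiv 2 (Fin n → ℝ)) ((WithLp.equiv 2 (Fin n → ℝ)).symm x) := rfl
      rw [hyx, hqf, sub_nonneg]
      have hb := f.le_opNorm ((WithLp.equiv 2 (Fin n → ℝ)).symm x)
      rw [opN, ← hf] at hop
      rw [hop, one_mul] at hb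
      exact pow_le_pow_left₀ (norm_nonneg _) hb 2
    refine ⟨hpsd, ?_⟩
    -- find a maximizer on the sphere
    have hnt : Nontrivial (EuclideanSpace ℝ (Fin n)) :=
      Module.nontrivial_of_finrank_pos (R := ℝ)
        (by rw [finrank_euclideanSpace_fin]; omega)
    have hsne : (Metric.sphere (0 : EuclideanSpace ℝ (Fin n)) 1).Nonempty :=
      NormedSpace.sphere_nonempty.mpr zero_le_one
    obtain ⟨x₀, hx₀mem, hmax⟩ :=
      (isCompact_sphere (0 : EuclideanSpace ℝ (Fin n)) 1).exists_isMaxOn hsne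
        (f.continuous.norm.continuousOn)
    have hx₀ : ‖x₀‖ = 1 := by simpa using hx₀mem
    have hub : ∀ y : EuclideanSpace ℝ (Fin n), ‖f y‖ ≤ ‖f x₀‖ * ‖y‖ := by
      intro y
      rcases eq_or_ne y 0 with h0 | h0
      · simp [h0]
      have hny : 0 < ‖y‖ := norm_pos_iff.mpr h0
      have hmem : (‖y‖⁻¹ • y) ∈ Metric.sphere (0 : EuclideanSpace ℝ (Fin n)) 1 := by
        simp [norm_smul, abs_of_pos (inv_pos.mpr hny), inv_mul_cancel₀ hny.ne']
      have := hmax hmem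
      simp only [Set.mem_setOf_eq, _root_.map_smul, norm_smul, norm_inv, norm_norm] at this
      calc ‖f y‖ = ‖y‖ * (‖y‖⁻¹ * ‖f y‖) := by field_simp
      _ ≤ ‖y‖ * ‖f x₀‖ := by
          apply mul_le_mul_of_nonneg_left _ (norm_nonneg y)
          simpa using this
      _ = ‖f x₀‖ * ‖y‖ := mul_comm _ _
    have h1 : ‖f‖ ≤ ‖f x₀‖ := f.opNorm_le_bound (norm_nonneg _) hub
    have h2 : ‖f x₀‖ ≤ ‖f‖ := by
      have := f.le_opNorm x₀
      rwa [hx₀, mul_one] at this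
    rw [opN, ← hf] at hop
    have hfx₀ : ‖f x₀‖ = 1 := le_antisymm (by linarith) (by linarith)
    intro hpd
    have hx0 : (WithLp.equiv 2 (Fin n → ℝ)) x₀ ≠ 0 := by
      intro h
      have : x₀ = 0 := by simpa using congrArg (WithLp.equiv 2 (Fin n → ℝ)).symm h
      rw [this, norm_zero] at hx₀
      norm_num at hx₀
    have := hpd.dotProduct_mulVec_pos hx0
    rw [hstar, hqf, hx₀, hfx₀] at this
    norm_num at this


def symSub (n : ℕ) : Submodule ℝ (Matrix (Fin n) (Fin n) ℝ) where
  carrier := {B | Bᵀ = B}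
  add_mem' := by
    intro a b ha hb
    simp only [Set.mem_setOf_eq] at *
    rw [transpose_add, ha, hb]
  zero_mem' := by simp
  smul_mem' := by
    intro c a ha
    simp only [Set.mem_setOf_eq] at *
    rw [transpose_smul, ha]

noncomputable def symToFun (n : ℕ) :
    symSub n ≃ₗ[ℝ] ({p : Fin n × Fin n // p.1 ≤ p.2} → ℝ) where
  toFun B := fun p => (B : Matrix (Fin n) (Fin n) ℝ) p.1.1 p.1.2
  map_add' := by intro a b; rfl
  map_smul' := by intro c a; rfl
  invFun g := ⟨Matrix.of fun i j =>
      if h : i ≤ j then g ⟨(i, j), h⟩ else g ⟨(j, i), le_of_not_ge h⟩, by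
    show _ᵀ = _
    ext i j
    simp only [transpose_apply, Matrix.of_apply]
    rcases le_or_gt i j with h | h
    · rcases eq_or_lt_of_le h with rfl | h'
      · simp
      · rw [dif_neg (not_le.mpr h'), dif_pos h]
    · rw [dif_pos h.le, dif_neg (not_le.mpr h)]⟩
  left_inv := by
    rintro ⟨B, hB⟩
    ext i j
    simp only [Matrix.of_apply]
    rcases le_or_gt i j with h | h
    · rw [dif_pos h]
    · rw [dif_neg (not_le.mpr h)]
      conv_rhs => rw [← hB]
      rfl
  right_inv := by
    intro g
    ext ⟨⟨i, j⟩, h⟩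
    simp [dif_pos h]

lemma card_pairs (n : ℕ) :
    Fintype.card {p : Fin n × Fin n // p.1 ≤ p.2} = n * (n + 1) / 2 := by
  rw [← Fintype.card_congr (Sym2.sortEquiv (α := Fin n))]
  rw [Sym2.card]
  simp [Nat.choose_two_right, Fintype.card_fin, Nat.mul_comm]

noncomputable def symEquivEuclid (n : ℕ) :
    symSub n ≃ₗ[ℝ] EuclideanSpace ℝ (Fin (n * (n + 1) / 2)) := by
  apply LinearEquiv.ofFinrankEq
  rw [finrank_euclideanSpace_fin, (symToFun n).finrank_eq, Module.finrank_pi, card_pairs]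


def S (n : ℕ) : Set (Matrix (Fin n) (Fin n) ℝ) :=
  {B | Bᵀ = B ∧ (1 - B * B).PosSemidef ∧ ¬(1 - B * B).PosDef}

lemma mem_S_iff (hn : 1 ≤ n) (B : Matrix (Fin n) (Fin n) ℝ) :
    B ∈ S n ↔ Bᵀ = B ∧ opN B = 1 := by
  constructor
  · rintro ⟨h1, h2⟩
    exact ⟨h1, (char hn h1).mp h2⟩
  · rintro ⟨h1, h2⟩
    exact ⟨h1, (char hn h1).mpr h2⟩

lemma mem_symSub {B : Matrix (Fin n) (Fin n) ℝ} (h : Bᵀ = B) : B ∈ symSub n := h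

lemma opN_zero : opN (0 : Matrix (Fin n) (Fin n) ℝ) = 0 := by
  simp [opN, map_zero]

lemma ne_zero_of_opN_one {B : Matrix (Fin n) (Fin n) ℝ} (h : opN B = 1) : B ≠ 0 := by
  intro h0
  rw [h0, opN_zero] at h
  norm_num at h

noncomputable def fwdAux (n : ℕ) (s : S n) : EuclideanSpace ℝ (Fin (n * (n + 1) / 2)) :=
  ‖symEquivEuclid n ⟨s.1, mem_symSub s.2.1⟩‖⁻¹ • symEquivEuclid n ⟨s.1, mem_symSub s.2.1⟩

noncomputable def bwdAux (n : ℕ)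
    (y : (Metric.sphere (0 : EuclideanSpace ℝ (Fin (n * (n + 1) / 2))) 1 : Set _)) :
    Matrix (Fin n) (Fin n) ℝ :=
  (opN (((symEquivEuclid n).symm y.1 : symSub n) : Matrix (Fin n) (Fin n) ℝ))⁻¹ •
    (((symEquivEuclid n).symm y.1 : symSub n) : Matrix (Fin n) (Fin n) ℝ)

lemma fwd_ne_zero (hn : 1 ≤ n) (s : S n) :
    symEquivEuclid n ⟨s.1, mem_symSub s.2.1⟩ ≠ 0 := by
  have hB := (mem_S_iff hn s.1).mp s.2
  intro h
  have h0 : (⟨s.1, mem_symSub s.2.1⟩ : symSub n) = 0 := by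
    apply (symEquivEuclid n).injective
    simpa using h
  exact ne_zero_of_opN_one hB.2 (congrArg Subtype.val h0)

lemma fwd_norm (hn : 1 ≤ n) (s : S n) : ‖fwdAux n s‖ = 1 := by
  have h := fwd_ne_zero hn s
  rw [fwdAux, norm_smul, norm_inv, norm_norm, inv_mul_cancel₀ (norm_ne_zero_iff.mpr h)]

lemma bwd_symm_ne_zero (hn : 1 ≤ n)
    (y : (Metric.sphere (0 : EuclideanSpace ℝ (Fin (n * (n + 1) / 2))) 1 : Set _)) :
    (((symEquivEuclid n).symm y.1 : symSub n) : Matrix (Fin n) (Fin n) ℝ) ≠ 0 := by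
  intro h
  have h1 : ((symEquivEuclid n).symm y.1 : symSub n) = 0 := Subtype.ext h
  have h2 : y.1 = 0 := by
    have := congrArg (symEquivEuclid n) h1
    simpa using this
  have := y.2
  rw [Metric.mem_sphere, h2] at this
  simp at this

lemma bwd_mem (hn : 1 ≤ n)
    (y : (Metric.sphere (0 : EuclideanSpace ℝ (Fin (n * (n + 1) / 2))) 1 : Set _)) :
    bwdAux n y ∈ S n := by
  set B := (((symEquivEuclid n).symm y.1 : symSub n) : Matrix (Fin n) (Fin n) ℝ) with hBdef
  have hBne : B ≠ 0 := bwd_symm_ne_zero hn y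
  have hpos : 0 < opN B := opN_pos hBne
  have hsym : Bᵀ = B := ((symEquivEuclid n).symm y.1).2
  rw [mem_S_iff hn]
  constructor
  · rw [bwdAux, transpose_smul, hsym]
  · rw [bwdAux, ← hBdef, opN_smul, abs_of_pos (inv_pos.mpr hpos), inv_mul_cancel₀ hpos.ne']

noncomputable def theHomeo (n : ℕ) (hn : 1 ≤ n) :
    (S n) ≃ₜ (Metric.sphere (0 : EuclideanSpace ℝ (Fin (n * (n + 1) / 2))) 1 : Set _) where
  toFun s := ⟨fwdAux n s, by simpa [Metric.mem_sphere] using fwd_norm hn s⟩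
  invFun y := ⟨bwdAux n y, bwd_mem hn y⟩
  left_inv := by
    rintro ⟨B, hB⟩
    have hmem := (mem_S_iff hn B).mp hB
    apply Subtype.ext
    show bwdAux n _ = B
    set Bm : symSub n := ⟨B, mem_symSub hmem.1⟩ with hBm
    set c : ℝ := ‖symEquivEuclid n Bm‖ with hc
    have hcpos : 0 < c := norm_pos_iff.mpr (fwd_ne_zero hn ⟨B, hB⟩)
    have h1 : (symEquivEuclid n).symm (fwdAux n ⟨B, hB⟩) = c⁻¹ • Bm := by
      rw [fwdAux]
      simp only [_root_.map_smul, LinearEquiv.symm_apply_apply]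
      rfl
    rw [bwdAux, h1]
    have h2 : ((c⁻¹ • Bm : symSub n) : Matrix (Fin n) (Fin n) ℝ) = c⁻¹ • B := rfl
    rw [h2, opN_smul, hmem.2, mul_one, abs_of_pos (inv_pos.mpr hcpos), inv_inv, smul_smul,
      mul_inv_cancel₀ hcpos.ne', one_smul]
  right_inv := by
    rintro ⟨y, hy⟩
    apply Subtype.ext
    show fwdAux n _ = y
    set Bm : symSub n := (symEquivEuclid n).symm y with hBm
    set c : ℝ := (opN (Bm : Matrix (Fin n) (Fin n) ℝ))⁻¹ with hc
    have hpos : 0 < opN (Bm : Matrix (Fin n) (Fin n) ℝ) :=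
      opN_pos (bwd_symm_ne_zero hn ⟨y, hy⟩)
    have hcpos : 0 < c := inv_pos.mpr hpos
    have hval : bwdAux n ⟨y, hy⟩ = ((c • Bm : symSub n) : Matrix (Fin n) (Fin n) ℝ) := rfl
    rw [fwdAux]
    have harg : (⟨bwdAux n ⟨y, hy⟩, mem_symSub (bwd_mem hn ⟨y, hy⟩).1⟩ : symSub n) = c • Bm :=
      Subtype.ext hval
    rw [harg]
    have h3 : symEquivEuclid n (c • Bm) = c • y := by
      rw [_root_.map_smul, hBm, LinearEquiv.apply_symm_apply]
    rw [h3, norm_smul, Real.norm_eq_abs, abs_of_pos hcpos]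
    have hyn : ‖y‖ = 1 := by simpa [Metric.mem_sphere] using hy
    rw [hyn, mul_one, smul_smul, inv_mul_cancel₀ hcpos.ne', one_smul]
  continuous_toFun := by
    apply Continuous.subtype_mk
    have hg : Continuous (fun s : S n => symEquivEuclid n ⟨s.1, mem_symSub s.2.1⟩) := by
      have hcont : Continuous ((symEquivEuclid n).toLinearMap) :=
        (symEquivEuclid n).toLinearMap.continuous_of_finiteDimensional
      exact hcont.comp (Continuous.subtype_mk continuous_subtype_val _)
    exact ((hg.norm.inv₀ fun s => norm_ne_zero_iff.mpr (fwd_ne_zero hn s)).smul hg)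
  continuous_invFun := by
    apply Continuous.subtype_mk
    have hg : Continuous (fun y : (Metric.sphere (0 : EuclideanSpace ℝ
        (Fin (n * (n + 1) / 2))) 1 : Set _) =>
        (((symEquivEuclid n).symm y.1 : symSub n) : Matrix (Fin n) (Fin n) ℝ)) := by
      have hcont : Continuous ((symEquivEuclid n).symm.toLinearMap) :=
        (symEquivEuclid n).symm.toLinearMap.continuous_of_finiteDimensional
      exact continuous_subtype_val.comp (hcont.comp continuous_subtype_val)
    have hopN : Continuous (fun B : Matrix (Fin n) (Fin n) ℝ => opN B) := by
      have : Continuous (toCLM n) := (toCLM n).continuous_of_finiteDimensional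
      exact this.norm
    exact (((hopN.comp hg).inv₀ fun y =>
      (opN_pos (bwd_symm_ne_zero hn y)).ne').smul hg)

end Stmt13Aux

theorem stmt13 (n : ℕ) (hn : 1 ≤ n) :
    Nonempty
      (({B : Matrix (Fin n) (Fin n) ℝ |
            Bᵀ = B ∧ (1 - B * B).PosSemidef ∧ ¬(1 - B * B).PosDef} : Set _) ≃ₜ
        (Metric.sphere (0 : EuclideanSpace ℝ (Fin (n * (n + 1) / 2))) 1 : Set _)) := by
  exact ⟨Stmt13Aux.theHomeo n hn⟩
end

section
/- Let n ≥ 1. In the space of n×n real matrices with its standard topology, the closure of the set {B : Bᵀ = B and I − B·B is positive definite} equals the set {B : Bᵀ = B and I − B·B is positive semi-definite}. -/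
open Matrix

private lemma psd_smul {n : ℕ} {A : Matrix (Fin n) (Fin n) ℝ} (hA : A.PosSemidef)
    {c : ℝ} (hc : 0 ≤ c) : (c • A).PosSemidef := by
  refine posSemidef_iff_dotProduct_mulVec.mpr ⟨?_, fun x => ?_⟩
  · unfold Matrix.IsHermitian at *
    rw [conjTranspose_smul, hA.1]
    simp
  · rw [smul_mulVec, dotProduct_smul, smul_eq_mul]
    exact mul_nonneg hc ((posSemidef_iff_dotProduct_mulVec.mp hA).2 x)

private lemma pd_smul_one {n : ℕ} {c : ℝ} (hc : 0 < c) :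
    (c • (1 : Matrix (Fin n) (Fin n) ℝ)).PosDef := by
  refine posDef_iff_dotProduct_mulVec.mpr ⟨?_, fun x hx => ?_⟩
  · unfold Matrix.IsHermitian
    rw [conjTranspose_smul, conjTranspose_one]
    simp
  · rw [smul_mulVec, one_mulVec, dotProduct_smul, smul_eq_mul]
    exact mul_pos hc (by simpa using Matrix.dotProduct_star_self_pos_iff.mpr hx)

theorem stmt14 (n : ℕ) (hn : 1 ≤ n) :
    closure {B : Matrix (Fin n) (Fin n) ℝ | Bᵀ = B ∧ (1 - B * B).PosDef}
      = {B : Matrix (Fin n) (Fin n) ℝ | Bᵀ = B ∧ (1 - B * B).PosSemidef} := by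
  apply subset_antisymm
  · -- closure of PosDef set ⊆ PosSemidef set, since the latter is closed
    have hset : {B : Matrix (Fin n) (Fin n) ℝ | Bᵀ = B ∧ (1 - B * B).PosSemidef}
        = {B : Matrix (Fin n) (Fin n) ℝ | Bᵀ = B} ∩
          ⋂ x : Fin n → ℝ, {B | 0 ≤ x ⬝ᵥ ((1 - B * B) *ᵥ x)} := by
      ext B
      simp only [Set.mem_setOf_eq, Set.mem_inter_iff, Set.mem_iInter]
      constructor
      · rintro ⟨hB, hpsd'⟩
        obtain ⟨hherm, hpsd⟩ := posSemidef_iff_dotProduct_mulVec.mp hpsd'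
        exact ⟨hB, fun x => by simpa using hpsd x⟩
      · rintro ⟨hB, hpsd⟩
        refine ⟨hB, posSemidef_iff_dotProduct_mulVec.mpr ⟨?_, fun x => by simpa using hpsd x⟩⟩
        unfold Matrix.IsHermitian
        rw [conjTranspose_sub, conjTranspose_one, conjTranspose_mul]
        have : Bᴴ = B := by
          rw [show Bᴴ = Bᵀ from rfl, hB]
        rw [this]
    have hclosed : IsClosed {B : Matrix (Fin n) (Fin n) ℝ | Bᵀ = B ∧ (1 - B * B).PosSemidef} := by
      rw [hset]
      apply IsClosed.inter
      · exact isClosed_eq (continuous_id.matrix_transpose) continuous_id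
      · refine isClosed_iInter fun x => ?_
        have hcont : Continuous fun B : Matrix (Fin n) (Fin n) ℝ =>
            x ⬝ᵥ ((1 - B * B) *ᵥ x) :=
          Continuous.dotProduct continuous_const
            ((Continuous.sub continuous_const (continuous_id.matrix_mul continuous_id)).matrix_mulVec
              continuous_const)
        exact isClosed_le continuous_const hcont
    refine closure_minimal (fun B hB => ⟨hB.1, hB.2.posSemidef⟩) hclosed
  · -- every PosSemidef point is a limit of PosDef points
    rintro B ⟨hB, hpsd⟩
    have key : ∀ t : ℝ, 0 ≤ t → t < 1 →
        (t • B) ∈ {B : Matrix (Fin n) (Fin n) ℝ | Bᵀ = B ∧ (1 - B * B).PosDef} := by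
      intro t ht0 ht1
      refine ⟨by rw [transpose_smul, hB], ?_⟩
      have h1 : (t • B) * (t • B) = (t * t) • (B * B) := by
        rw [smul_mul_smul_comm]
      have h2 : (1 : Matrix (Fin n) (Fin n) ℝ) - (t * t) • (B * B)
          = (1 - t * t) • (1 : Matrix (Fin n) (Fin n) ℝ)
            + (t * t) • ((1 : Matrix (Fin n) (Fin n) ℝ) - B * B) := by
        rw [smul_sub, sub_smul, one_smul]
        abel
      rw [h1, h2]
      exact (pd_smul_one (by nlinarith)).add_posSemidef (psd_smul hpsd (by positivity))
    have htend : Filter.Tendsto (fun k : ℕ => (1 - 1 / (k + 1 : ℝ)) • B)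
        Filter.atTop (nhds B) := by
      have h1 : Filter.Tendsto (fun k : ℕ => (1 - 1 / (k + 1 : ℝ))) Filter.atTop (nhds 1) := by
        have := tendsto_one_div_add_atTop_nhds_zero_nat (𝕜 := ℝ)
        simpa using (tendsto_const_nhds (x := (1 : ℝ))).sub this
      simpa using h1.smul_const B
    refine mem_closure_of_tendsto htend (Filter.Eventually.of_forall fun k => ?_)
    apply key
    · have : 1 / (k + 1 : ℝ) ≤ 1 := by
        rw [div_le_one (by positivity)]
        linarith
      linarith
    · have : 0 < 1 / (k + 1 : ℝ) := by positivity
      linarith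
end

section
/- Let n ≥ 2. Suppose given real numbers a_{p,q} for 1 ≤ q ≤ n and n+1−q ≤ p ≤ n, with a_{p,q} ≠ 0 for all such p,q and a_{n,q} > 0 for all q = 1,…,n. Let u = Π_{q=1}^{n} ( y_{n+1−q}(a_{n+1−q,q}) · y_{n+2−q}(a_{n+2−q,q}) ⋯ y_n(a_{n,q}) ), the 2n×2n matrix product taken with factors multiplied left to right in the order written (the q = 1 group leftmost). Then u has n×n block form [[A, 0],[C, D]] and the matrix AᵀC is symmetric positive definite. -/
open Matrix

/-- The negative simple root group element `y_i(a)` (1-based index `i`), a `2n×2n` matrix: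
`y_i(a) = I + a(E_{i+1,i} − E_{n+i,n+i+1})` for `1 ≤ i ≤ n-1`, and
`y_n(a) = I + a E_{2n,n}`. -/
def yMat (n : ℕ) (i : ℕ) (a : ℝ) : Matrix (Fin (n + n)) (Fin (n + n)) ℝ :=
  if h : 1 ≤ i ∧ i < n then
    1 + a • (Matrix.single (Fin.castAdd n ⟨i, h.2⟩) (Fin.castAdd n ⟨i - 1, by omega⟩) 1
      - Matrix.single (Fin.natAdd n ⟨i - 1, by omega⟩) (Fin.natAdd n ⟨i, h.2⟩) 1)
  else if h2 : i = n ∧ 1 ≤ n then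
    1 + a • Matrix.single (Fin.natAdd n ⟨n - 1, by omega⟩) (Fin.castAdd n ⟨n - 1, by omega⟩) 1
  else 1

/-- The product `u = Π_{q=1}^{n} ( y_{n+1−q}(a_{n+1−q,q}) ⋯ y_n(a_{n,q}) )`,
factors multiplied left to right (the `q = 1` group leftmost). -/
def uProd (n : ℕ) (a : ℕ → ℕ → ℝ) : Matrix (Fin (n + n)) (Fin (n + n)) ℝ :=
  ((List.range n).map (fun m =>
    ((List.range (m + 1)).map (fun j =>
      yMat n (n - m + j) (a (n - m + j) (m + 1)))).prod)).prod

/-- The product `u₀` obtained from `u` by deleting every `y_n`-factor. -/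
def u0Prod (n : ℕ) (a : ℕ → ℕ → ℝ) : Matrix (Fin (n + n)) (Fin (n + n)) ℝ :=
  ((List.range n).map (fun m =>
    ((List.range m).map (fun j =>
      yMat n (n - m + j) (a (n - m + j) (m + 1)))).prod)).prod

/-- Upper-left `n×n` block. -/
def blk11 (n : ℕ) (u : Matrix (Fin (n + n)) (Fin (n + n)) ℝ) : Matrix (Fin n) (Fin n) ℝ :=
  Matrix.of fun i j => u (Fin.castAdd n i) (Fin.castAdd n j)

/-- Upper-right `n×n` block. -/
def blk12 (n : ℕ) (u : Matrix (Fin (n + n)) (Fin (n + n)) ℝ) : Matrix (Fin n) (Fin n) ℝ :=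
  Matrix.of fun i j => u (Fin.castAdd n i) (Fin.natAdd n j)

/-- Lower-left `n×n` block. -/
def blk21 (n : ℕ) (u : Matrix (Fin (n + n)) (Fin (n + n)) ℝ) : Matrix (Fin n) (Fin n) ℝ :=
  Matrix.of fun i j => u (Fin.natAdd n i) (Fin.castAdd n j)

/-- Lower-right `n×n` block. -/
def blk22 (n : ℕ) (u : Matrix (Fin (n + n)) (Fin (n + n)) ℝ) : Matrix (Fin n) (Fin n) ℝ :=
  Matrix.of fun i j => u (Fin.natAdd n i) (Fin.natAdd n j)

section helpers
variable {m' n' o₁ o₂ : Type*} [DecidableEq m'] [DecidableEq n'] [DecidableEq o₁] [DecidableEq o₂]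
  {α : Type*} [Zero α]

lemma std_transpose (i : m') (j : n') (c : α) :
    (Matrix.single i j c)ᵀ = Matrix.single j i c := by
  ext p q
  simp [Matrix.single, Matrix.transpose_apply, and_comm]

lemma reindex_std {p' q' : Type*} [DecidableEq p'] [DecidableEq q']
    (f : m' ≃ p') (g : n' ≃ q') (i : m') (j : n') (c : α) :
    (Matrix.reindex f g) (Matrix.single i j c)
      = Matrix.single (f i) (g j) c := by
  ext p q
  simp only [Matrix.reindex_apply, Matrix.submatrix_apply, Matrix.single, Matrix.of_apply]
  congr 1
  simp [Equiv.eq_symm_apply, eq_comm]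

lemma fromBlocks_std_ll (i : m') (j : n') (c : α) :
    Matrix.fromBlocks (Matrix.single i j c) (0 : Matrix m' o₂ α)
      (0 : Matrix o₁ n' α) (0 : Matrix o₁ o₂ α)
      = Matrix.single (Sum.inl i : m' ⊕ o₁) (Sum.inl j : n' ⊕ o₂) c := by
  ext (p|p) (q|q) <;> simp [Matrix.single, Matrix.fromBlocks]

lemma fromBlocks_std_rr (i : o₁) (j : o₂) (c : α) :
    Matrix.fromBlocks (0 : Matrix m' n' α) (0 : Matrix m' o₂ α)
      (0 : Matrix o₁ n' α) (Matrix.single i j c)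
      = Matrix.single (Sum.inr i : m' ⊕ o₁) (Sum.inr j : n' ⊕ o₂) c := by
  ext (p|p) (q|q) <;> simp [Matrix.single, Matrix.fromBlocks]

lemma fromBlocks_std_rl (i : o₁) (j : n') (c : α) :
    Matrix.fromBlocks (0 : Matrix m' n' α) (0 : Matrix m' o₂ α)
      (Matrix.single i j c) (0 : Matrix o₁ o₂ α)
      = Matrix.single (Sum.inr i : m' ⊕ o₁) (Sum.inl j : n' ⊕ o₂) c := by
  ext (p|p) (q|q) <;> simp [Matrix.single, Matrix.fromBlocks]

end helpers

/-- Reindexing map from the block (sum-type) world to `Fin (n+n)`. -/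
def RB (n : ℕ) (X : Matrix (Fin n ⊕ Fin n) (Fin n ⊕ Fin n) ℝ) :
    Matrix (Fin (n + n)) (Fin (n + n)) ℝ :=
  (Matrix.reindexAlgEquiv ℝ ℝ (finSumFinEquiv : Fin n ⊕ Fin n ≃ Fin (n + n))) X

lemma RB_mul {n : ℕ} (X Y : Matrix (Fin n ⊕ Fin n) (Fin n ⊕ Fin n) ℝ) :
    RB n (X * Y) = RB n X * RB n Y := map_mul _ _ _

lemma RB_one {n : ℕ} : RB n 1 = 1 := map_one _

lemma yMat_eq_lt {n i : ℕ} (h1 : 1 ≤ i) (h2 : i < n) (c : ℝ) :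
    yMat n i c = RB n
      (Matrix.fromBlocks
        (1 + c • Matrix.single (⟨i, h2⟩ : Fin n) ⟨i - 1, by omega⟩ 1) 0 0
        (1 - c • Matrix.single (⟨i - 1, by omega⟩ : Fin n) ⟨i, h2⟩ 1)) := by
  have hA : (Matrix.fromBlocks
        (1 + c • Matrix.single (⟨i, h2⟩ : Fin n) ⟨i - 1, by omega⟩ 1) 0 0
        (1 - c • Matrix.single (⟨i - 1, by omega⟩ : Fin n) ⟨i, h2⟩ 1))
      = (1 : Matrix (Fin n ⊕ Fin n) (Fin n ⊕ Fin n) ℝ) + c •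
        (Matrix.fromBlocks (Matrix.single (⟨i, h2⟩ : Fin n) ⟨i - 1, by omega⟩ 1) 0 0 0
         - Matrix.fromBlocks 0 0 0 (Matrix.single (⟨i - 1, by omega⟩ : Fin n) ⟨i, h2⟩ 1)) := by
    ext (p|p) (q|q) <;>
      simp [Matrix.fromBlocks, Matrix.one_apply, Matrix.sub_apply, Matrix.add_apply,
        Matrix.smul_apply, sub_eq_add_neg, Matrix.single, mul_ite, mul_one, mul_zero]
  rw [yMat, dif_pos ⟨h1, h2⟩, hA, RB]
  rw [map_add, _root_.map_one, _root_.map_smul, map_sub]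
  rw [Matrix.reindexAlgEquiv_apply, Matrix.reindexAlgEquiv_apply,
    fromBlocks_std_ll, fromBlocks_std_rr, reindex_std, reindex_std]
  simp [finSumFinEquiv_apply_left, finSumFinEquiv_apply_right]

lemma yMat_eq_n {n : ℕ} (hn : 1 ≤ n) (c : ℝ) :
    yMat n n c = RB n
      (Matrix.fromBlocks 1 0
        (c • Matrix.single (⟨n - 1, by omega⟩ : Fin n) ⟨n - 1, by omega⟩ 1) 1) := by
  have hA : (Matrix.fromBlocks 1 0
        (c • Matrix.single (⟨n - 1, by omega⟩ : Fin n) ⟨n - 1, by omega⟩ 1) 1)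
      = (1 : Matrix (Fin n ⊕ Fin n) (Fin n ⊕ Fin n) ℝ) + c •
        (Matrix.fromBlocks 0 0
          (Matrix.single (⟨n - 1, by omega⟩ : Fin n) ⟨n - 1, by omega⟩ 1) 0) := by
    ext (p|p) (q|q) <;>
      simp [Matrix.fromBlocks, Matrix.one_apply, Matrix.add_apply, Matrix.smul_apply, Matrix.single, mul_ite, mul_one, mul_zero]
  rw [yMat, dif_neg (by omega), dif_pos ⟨rfl, hn⟩, hA, RB]
  rw [map_add, _root_.map_one, _root_.map_smul]
  rw [Matrix.reindexAlgEquiv_apply, fromBlocks_std_rl, reindex_std]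
  simp [finSumFinEquiv_apply_left, finSumFinEquiv_apply_right]

lemma mul_unitriang_cancel {ι : Type*} [DecidableEq ι] [Fintype ι] (u v : ι) (h : u ≠ v) (c : ℝ) :
    (1 + c • Matrix.single u v (1:ℝ)) * (1 - c • Matrix.single u v 1) = 1 := by
  have hSS : Matrix.single u v (1:ℝ) * Matrix.single u v 1 = 0 :=
    Matrix.single_mul_single_of_ne (i := u) (j := v) (k := u) (h := h.symm) (c := 1) (d := 1)
  rw [mul_sub, mul_one, add_mul, one_mul, smul_mul_assoc, mul_smul_comm, hSS]
  simp

lemma groupPrefix {n : ℕ} (a : ℕ → ℕ → ℝ) {m : ℕ} (hm : m < n) :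
    ∀ t, t ≤ m →
    ∃ L D : Matrix (Fin n) (Fin n) ℝ,
      ((List.range t).map (fun j => yMat n (n - m + j) (a (n - m + j) (m + 1)))).prod
        = RB n (Matrix.fromBlocks L 0 0 D) ∧ Lᵀ * D = 1 ∧
      ∀ (x : Fin n → ℝ) (k : Fin n), (L *ᵥ x) k = x k +
        (if n - m ≤ k.val ∧ k.val < n - m + t then
          a k.val (m + 1) * x ⟨k.val - 1, Nat.lt_of_le_of_lt (Nat.sub_le _ _) k.isLt⟩ else 0) := by
  intro t
  induction t with
  | zero =>
    intro _
    refine ⟨1, 1, ?_, by simp, ?_⟩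
    · simp [Matrix.fromBlocks_one, RB_one]
    · intro x k
      rw [if_neg (by omega), Matrix.one_mulVec, add_zero]
  | succ t ih =>
    intro ht
    obtain ⟨L, D, hprod, hLD, hmv⟩ := ih (by omega)
    have h1 : 1 ≤ n - m + t := by omega
    have h2 : n - m + t < n := by omega
    have hne : (⟨n - m + t, h2⟩ : Fin n) ≠ ⟨n - m + t - 1, by omega⟩ := by
      simp [Fin.ext_iff]; omega
    refine ⟨L * (1 + a (n - m + t) (m+1) • Matrix.single (⟨n - m + t, h2⟩ : Fin n)
        ⟨n - m + t - 1, by omega⟩ 1),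
      D * (1 - a (n - m + t) (m+1) • Matrix.single (⟨n - m + t - 1, by omega⟩ : Fin n)
        ⟨n - m + t, h2⟩ 1), ?_, ?_, ?_⟩
    · rw [List.range_succ, List.map_append, List.prod_append, hprod]
      simp only [List.map_cons, List.map_nil, List.prod_cons, List.prod_nil, mul_one]
      rw [yMat_eq_lt h1 h2, ← RB_mul]
      congr 1
      rw [Matrix.fromBlocks_multiply]
      congr 1 <;> simp
    · rw [Matrix.transpose_mul, Matrix.transpose_add, Matrix.transpose_one,
        Matrix.transpose_smul, std_transpose]
      rw [mul_assoc, ← mul_assoc Lᵀ, hLD, one_mul]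
      exact mul_unitriang_cancel _ _ hne.symm _
    · intro x k
      rw [← Matrix.mulVec_mulVec]
      set y := (1 + a (n - m + t) (m+1) • Matrix.single (⟨n - m + t, h2⟩ : Fin n)
        ⟨n - m + t - 1, by omega⟩ 1) *ᵥ x with hydef
      have hy : ∀ k' : Fin n, y k' = x k' +
          (if k'.val = n - m + t then
            a (n - m + t) (m+1) * x ⟨n - m + t - 1, by omega⟩ else 0) := by
        intro k'
        rw [hydef, Matrix.add_mulVec, Matrix.one_mulVec, Matrix.smul_mulVec,
          Matrix.single_mulVec]
        simp only [Pi.add_apply, Pi.smul_apply, Function.update_apply, Pi.zero_apply,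
          one_mul, smul_eq_mul, mul_ite, mul_zero, Fin.ext_iff]
      rw [hmv y k]
      simp only [hy]
      by_cases hk1 : (k : ℕ) = n - m + t
      · have e1 : (⟨(k : ℕ) - 1, Nat.lt_of_le_of_lt (Nat.sub_le _ _) k.isLt⟩ : Fin n)
            = (⟨n - m + t - 1, by omega⟩ : Fin n) := by
          apply Fin.ext
          simp [hk1]
        rw [if_pos hk1,
          if_neg (show ¬(n - m ≤ (k:ℕ) ∧ (k:ℕ) < n - m + t) by omega),
          if_pos (show n - m ≤ (k:ℕ) ∧ (k:ℕ) < n - m + (t+1) by omega),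
          e1]
        rw [show a (k : ℕ) (m + 1) = a (n - m + t) (m + 1) by rw [hk1]]
        ring
      · rw [if_neg hk1]
        by_cases hk2 : n - m ≤ (k:ℕ) ∧ (k:ℕ) < n - m + t
        · rw [if_pos hk2,
            if_pos (show n - m ≤ (k:ℕ) ∧ (k:ℕ) < n - m + (t+1) by omega),
            if_neg (show ¬((⟨(k:ℕ) - 1, Nat.lt_of_le_of_lt (Nat.sub_le _ _) k.isLt⟩ : Fin n) : ℕ)
              = n - m + t by simp; omega)]
          ring
        · rw [if_neg hk2,
            if_neg (show ¬(n - m ≤ (k:ℕ) ∧ (k:ℕ) < n - m + (t+1)) by omega)]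
          ring

lemma quad_std {n : ℕ} (k : Fin n) (x : Fin n → ℝ) :
    x ⬝ᵥ (Matrix.single k k (1:ℝ) *ᵥ x) = x k * x k := by
  simp [Matrix.single_mulVec, dotProduct, Function.update_apply,
    mul_ite, Finset.sum_ite_eq']

lemma quad_conj {n : ℕ} (L M : Matrix (Fin n) (Fin n) ℝ) (x : Fin n → ℝ) :
    x ⬝ᵥ ((Lᵀ * M * L) *ᵥ x) = (L *ᵥ x) ⬝ᵥ (M *ᵥ (L *ᵥ x)) := by
  rw [mul_assoc, ← Matrix.mulVec_mulVec, ← Matrix.mulVec_mulVec,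
    Matrix.dotProduct_mulVec, Matrix.vecMul_transpose]

lemma groupFull {n : ℕ} (a : ℕ → ℕ → ℝ) {m : ℕ} (hm : m < n) :
    ∃ L D : Matrix (Fin n) (Fin n) ℝ,
      ((List.range (m + 1)).map (fun j => yMat n (n - m + j) (a (n - m + j) (m + 1)))).prod
        = RB n (Matrix.fromBlocks L 0
            (a n (m + 1) • (D * Matrix.single (⟨n - 1, by omega⟩ : Fin n)
              ⟨n - 1, by omega⟩ 1)) D) ∧
      Lᵀ * D = 1 ∧
      ∀ (x : Fin n → ℝ) (k : Fin n), n - m ≤ (k : ℕ) →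
        (L *ᵥ x) k = x k + a (k : ℕ) (m + 1)
          * x ⟨(k : ℕ) - 1, Nat.lt_of_le_of_lt (Nat.sub_le _ _) k.isLt⟩ := by
  obtain ⟨L, D, hprod, hLD, hmv⟩ := groupPrefix a hm m le_rfl
  refine ⟨L, D, ?_, hLD, ?_⟩
  · rw [List.range_succ, List.map_append, List.prod_append, hprod]
    simp only [List.map_cons, List.map_nil, List.prod_cons, List.prod_nil, mul_one]
    have hmn : n - m + m = n := by omega
    rw [hmn, yMat_eq_n (by omega), ← RB_mul]
    congr 1
    rw [Matrix.fromBlocks_multiply]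
    congr 1 <;> simp [mul_smul_comm]
    rw [← mul_smul_comm, Matrix.smul_single, smul_eq_mul, mul_one]
  · intro x k hk
    rw [hmv x k, if_pos ⟨hk, by have := k.isLt; omega⟩]

lemma mainProd {n : ℕ} (hn : 1 ≤ n) (a : ℕ → ℕ → ℝ)
    (hnz : ∀ p q : ℕ, 1 ≤ q → q ≤ n → n + 1 - q ≤ p → p ≤ n → a p q ≠ 0)
    (hpos : ∀ q : ℕ, 1 ≤ q → q ≤ n → 0 < a n q) :
    ∀ m, m ≤ n →
    ∃ A C D : Matrix (Fin n) (Fin n) ℝ,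
      ((List.range m).map (fun m' =>
        ((List.range (m' + 1)).map (fun j =>
          yMat n (n - m' + j) (a (n - m' + j) (m' + 1)))).prod)).prod
        = RB n (Matrix.fromBlocks A 0 C D) ∧
      Aᵀ * D = 1 ∧
      (Aᵀ * C)ᵀ = Aᵀ * C ∧
      (∀ x : Fin n → ℝ, 0 ≤ x ⬝ᵥ ((Aᵀ * C) *ᵥ x)) ∧
      (∀ x : Fin n → ℝ, x ⬝ᵥ ((Aᵀ * C) *ᵥ x) = 0 → ∀ k : Fin n, n - m ≤ (k : ℕ) → x k = 0) := by
  intro m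
  induction m with
  | zero =>
    intro _
    refine ⟨1, 0, 1, ?_, by simp, by simp, by simp, ?_⟩
    · simp [Matrix.fromBlocks_one, RB_one]
    · intro x _ k hk
      exact absurd hk (by have := k.isLt; omega)
  | succ m ih =>
    intro hm1
    have hm : m < n := by omega
    obtain ⟨A, C, D, hprod, hAD, hsym, hnn, hker⟩ := ih (by omega)
    obtain ⟨L, DG, hGprod, hLD, hmv⟩ := groupFull a hm
    set c : ℝ := a n (m + 1) with hc
    have hcpos : 0 < c := hpos (m + 1) (by omega) (by omega)
    set E : Matrix (Fin n) (Fin n) ℝ :=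
      Matrix.single (⟨n - 1, by omega⟩ : Fin n) ⟨n - 1, by omega⟩ 1 with hE
    have hM1 : (A * L)ᵀ * (C * L + D * (c • (DG * E))) = Lᵀ * (Aᵀ * C) * L + c • E := by
      rw [Matrix.transpose_mul, mul_add]
      congr 1
      · rw [mul_assoc Lᵀ Aᵀ (C * L), ← mul_assoc Aᵀ C L, ← mul_assoc]
      · rw [mul_smul_comm c D, mul_smul_comm c (Lᵀ * Aᵀ)]
        congr 1
        rw [mul_assoc Lᵀ Aᵀ, ← mul_assoc Aᵀ D, hAD, one_mul, ← mul_assoc, hLD, one_mul]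
    have hquad : ∀ x : Fin n → ℝ,
        x ⬝ᵥ (((A * L)ᵀ * (C * L + D * (c • (DG * E)))) *ᵥ x)
          = (L *ᵥ x) ⬝ᵥ ((Aᵀ * C) *ᵥ (L *ᵥ x)) + c * (x ⟨n - 1, by omega⟩ * x ⟨n - 1, by omega⟩) := by
      intro x
      rw [hM1, Matrix.add_mulVec, dotProduct_add, quad_conj,
        Matrix.smul_mulVec, dotProduct_smul, hE, quad_std, smul_eq_mul]
    refine ⟨A * L, C * L + D * (c • (DG * E)), D * DG, ?_, ?_, ?_, ?_, ?_⟩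
    · rw [List.range_succ, List.map_append, List.prod_append, hprod]
      simp only [List.map_cons, List.map_nil, List.prod_cons, List.prod_nil, mul_one]
      rw [hGprod, ← RB_mul]
      congr 1
      rw [Matrix.fromBlocks_multiply]
      congr 1 <;> simp
    · rw [Matrix.transpose_mul, mul_assoc Lᵀ, ← mul_assoc Aᵀ, hAD, one_mul, hLD]
    · rw [hM1, Matrix.transpose_add, Matrix.transpose_smul, hE, std_transpose,
        Matrix.transpose_mul, Matrix.transpose_mul, Matrix.transpose_transpose, hsym,
        mul_assoc, ← mul_assoc Aᵀ C L, ← mul_assoc]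
    · intro x
      rw [hquad x]
      exact add_nonneg (hnn _) (mul_nonneg hcpos.le (mul_self_nonneg _))
    · intro x hx k hk
      rw [hquad x] at hx
      have h1 : 0 ≤ (L *ᵥ x) ⬝ᵥ ((Aᵀ * C) *ᵥ (L *ᵥ x)) := hnn _
      have h2 : 0 ≤ c * (x ⟨n - 1, by omega⟩ * x ⟨n - 1, by omega⟩) :=
        mul_nonneg hcpos.le (mul_self_nonneg _)
      have hq0 : (L *ᵥ x) ⬝ᵥ ((Aᵀ * C) *ᵥ (L *ᵥ x)) = 0 := by linarith
      have hxn : x (⟨n - 1, by omega⟩ : Fin n) = 0 := by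
        have : c * (x ⟨n - 1, by omega⟩ * x ⟨n - 1, by omega⟩) = 0 := by linarith
        rcases mul_eq_zero.mp this with h | h
        · exact absurd h hcpos.ne'
        · exact (mul_self_eq_zero).mp h
      have hkerL : ∀ k' : Fin n, n - m ≤ (k' : ℕ) → (L *ᵥ x) k' = 0 := hker _ hq0
      have key : ∀ t : ℕ, ∀ k' : Fin n, (k' : ℕ) + t = n - 1 → n - (m + 1) ≤ (k' : ℕ) →
          x k' = 0 := by
        intro t
        induction t with
        | zero =>
          intro k' h0 _
          have : k' = ⟨n - 1, by omega⟩ := Fin.ext (by simp; omega)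
          rw [this]; exact hxn
        | succ t iht =>
          intro k' h0 h1'
          have hlt : (k' : ℕ) + 1 < n := by omega
          have hup : x (⟨(k' : ℕ) + 1, hlt⟩ : Fin n) = 0 :=
            iht ⟨(k' : ℕ) + 1, hlt⟩ (by simp; omega) (by simp; omega)
          have hL0 : (L *ᵥ x) ⟨(k' : ℕ) + 1, hlt⟩ = 0 := hkerL _ (by simp; omega)
          rw [hmv x ⟨(k' : ℕ) + 1, hlt⟩ (by simp; omega)] at hL0
          have e1 : (⟨((⟨(k' : ℕ) + 1, hlt⟩ : Fin n) : ℕ) - 1,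
              Nat.lt_of_le_of_lt (Nat.sub_le _ _) (⟨(k' : ℕ) + 1, hlt⟩ : Fin n).isLt⟩ : Fin n)
              = k' := Fin.ext (by simp)
          rw [e1, hup, zero_add] at hL0
          rcases mul_eq_zero.mp hL0 with h | h
          · exact absurd h (hnz ((k' : ℕ) + 1) (m + 1) (by omega) (by omega) (by simp; omega)
              (by omega))
          · exact h
      exact key (n - 1 - (k : ℕ)) k (by have := k.isLt; omega) hk

lemma blk11_RB {n : ℕ} (X : Matrix (Fin n ⊕ Fin n) (Fin n ⊕ Fin n) ℝ) :
    blk11 n (RB n X) = X.toBlocks₁₁ := by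
  ext i j
  simp only [blk11, Matrix.of_apply, RB, Matrix.reindexAlgEquiv_apply, Matrix.reindex_apply,
    Matrix.submatrix_apply, finSumFinEquiv_symm_apply_castAdd,
    finSumFinEquiv_symm_apply_natAdd, Matrix.toBlocks₁₁]

lemma blk12_RB {n : ℕ} (X : Matrix (Fin n ⊕ Fin n) (Fin n ⊕ Fin n) ℝ) :
    blk12 n (RB n X) = X.toBlocks₁₂ := by
  ext i j
  simp only [blk12, Matrix.of_apply, RB, Matrix.reindexAlgEquiv_apply, Matrix.reindex_apply,
    Matrix.submatrix_apply, finSumFinEquiv_symm_apply_castAdd,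
    finSumFinEquiv_symm_apply_natAdd, Matrix.toBlocks₁₂]

lemma blk21_RB {n : ℕ} (X : Matrix (Fin n ⊕ Fin n) (Fin n ⊕ Fin n) ℝ) :
    blk21 n (RB n X) = X.toBlocks₂₁ := by
  ext i j
  simp only [blk21, Matrix.of_apply, RB, Matrix.reindexAlgEquiv_apply, Matrix.reindex_apply,
    Matrix.submatrix_apply, finSumFinEquiv_symm_apply_castAdd,
    finSumFinEquiv_symm_apply_natAdd, Matrix.toBlocks₂₁]

theorem stmt15 (n : ℕ) (hn : 2 ≤ n) (a : ℕ → ℕ → ℝ)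
    (hnz : ∀ p q : ℕ, 1 ≤ q → q ≤ n → n + 1 - q ≤ p → p ≤ n → a p q ≠ 0)
    (hpos : ∀ q : ℕ, 1 ≤ q → q ≤ n → 0 < a n q) :
    blk12 n (uProd n a) = 0 ∧
    ((blk11 n (uProd n a))ᵀ * blk21 n (uProd n a)).PosDef := by
  obtain ⟨A, C, D, hprod, hAD, hsym, hnn, hker⟩ := mainProd (by omega) a hnz hpos n le_rfl
  have hu : uProd n a = RB n (Matrix.fromBlocks A 0 C D) := by
    rw [uProd, hprod]
  rw [hu, blk11_RB, blk12_RB, blk21_RB, Matrix.toBlocks_fromBlocks₁₁,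
    Matrix.toBlocks_fromBlocks₁₂, Matrix.toBlocks_fromBlocks₂₁]
  refine ⟨rfl, Matrix.posDef_iff_dotProduct_mulVec.mpr ⟨?_, ?_⟩⟩
  · rw [Matrix.IsHermitian, Matrix.conjTranspose_eq_transpose_of_trivial, hsym]
  · intro x hx
    have hsx : star x = x := by
      funext i; exact star_trivial _
    rw [hsx]
    rcases lt_or_eq_of_le (hnn x) with h | h
    · exact h
    · exfalso
      apply hx
      funext k
      exact hker x h.symm k (by omega)
end
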